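/- arXiv:1702.03749 — 4 statements merged into one kernel-verified Lean document; each statement's English description precedes it below -/
import Mathlib

section
/- Let N ≥ 2 and let Ω ⊂ ℝ^N be a bounded open set with ℋ^{N−1}(∂Ω) < +∞. Let u ∈ L^∞(Ω) with |Du|(Ω) < +∞, extended to zero outside Ω. Then u ∈ BV(ℝ^N). -/
open MeasureTheory Metric Set Filter Topology ENNReal

noncomputable section

abbrev RN (N : ℕ) := EuclideanSpace ℝ (Fin N)

/-- `E` has density `t` at `x`. -/
def HasDensityAt {N : ℕ} (E : Set (RN N)) (t : ℝ) (x : RN N) : Prop :=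
  Tendsto (fun ρ : ℝ => volume (E ∩ ball x ρ) / volume (ball x ρ))
    (𝓝[>] 0) (𝓝 (ENNReal.ofReal t))

/-- The set of points where `E` has density `t`. -/
def densityPts {N : ℕ} (E : Set (RN N)) (t : ℝ) : Set (RN N) := {x | HasDensityAt E t x}

/-- The essential boundary `∂* E`. -/
def essBoundary {N : ℕ} (E : Set (RN N)) : Set (RN N) :=
  univ \ (densityPts E 0 ∪ densityPts E 1)

/-- Approximate upper limit `v⁺(x)`. -/
def apUpper {N : ℕ} (v : RN N → ℝ) (x : RN N) : EReal :=
  sInf ((fun t : ℝ => (t : EReal)) '' {t | HasDensityAt {y | v y > t} 0 x})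

/-- Approximate lower limit `v⁻(x)`. -/
def apLower {N : ℕ} (v : RN N → ℝ) (x : RN N) : EReal :=
  sSup ((fun t : ℝ => (t : EReal)) '' {t | HasDensityAt {y | v y > t} 1 x})

/-- The approximate discontinuity set `S(v)`. -/
def apDiscont {N : ℕ} (v : RN N → ℝ) : Set (RN N) := {x | apUpper v x ≠ apLower v x}

/-- Conversion from `EReal` to `ℝ≥0∞`, sending `⊤` to `⊤` and negatives to `0`. -/
def erealToENNReal (x : EReal) : ℝ≥0∞ :=
  if x = ⊤ then ⊤ else ENNReal.ofReal x.toReal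

/-- `|v⁺(x) - v⁻(x)|` as an extended nonnegative real. -/
def jumpE {N : ℕ} (v : RN N → ℝ) (x : RN N) : ℝ≥0∞ :=
  erealToENNReal (apUpper v x - apLower v x) ⊔ erealToENNReal (apLower v x - apUpper v x)

/-- Divergence of a vector field. -/
def divg {N : ℕ} (g : RN N → RN N) (x : RN N) : ℝ :=
  ∑ i, fderiv ℝ g x (EuclideanSpace.single i 1) i

/-- Total variation `|Du|(Ω)`. -/
def totVar {N : ℕ} (u : RN N → ℝ) (Ω : Set (RN N)) : ℝ≥0∞ :=
  ⨆ (g : RN N → RN N) (_ : ContDiff ℝ 1 g) (_ : HasCompactSupport g)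
    (_ : tsupport g ⊆ Ω) (_ : ∀ x, ‖g x‖ ≤ 1),
    ENNReal.ofReal (∫ x in Ω, u x * divg g x)

/-- The isoperimetric constant `C(N)`. -/
def isoConst (N : ℕ) : ℝ≥0∞ :=
  volume (ball (0 : RN N) 1) ^ (((N : ℝ) - 1) / N) /
    μH[(N : ℝ) - 1] (sphere (0 : RN N) 1)

/-- `s` is σ-finite with respect to `μ`. -/
def SigmaFiniteOn {N : ℕ} (μ : Measure (RN N)) (s : Set (RN N)) : Prop :=
  ∃ f : ℕ → Set (RN N), (∀ n, MeasurableSet (f n) ∧ μ (f n) < ⊤) ∧ s = ⋃ n, f n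

/-- `v` is the weak (distributional) gradient of `u` on `Ω`. -/
def IsWeakGradOn {N : ℕ} (u : RN N → ℝ) (v : RN N → RN N) (Ω : Set (RN N)) : Prop :=
  ∀ g : RN N → ℝ, ContDiff ℝ 1 g → HasCompactSupport g → tsupport g ⊆ Ω →
    ∀ i : Fin N, ∫ x in Ω, u x * fderiv ℝ g x (EuclideanSpace.single i 1) =
      -∫ x in Ω, v x i * g x






/-- Covering lemma: a compact set of finite `ℋ^{N-1}` measure can be covered by finitely many
balls of radii `< ε` with controlled `∑ rᵢ^{N-1}`. -/
lemma cover_lemma (N : ℕ) (hN : 2 ≤ N) (s : Set (RN N)) (hs : IsCompact s)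
    (hfin : μH[(N : ℝ) - 1] s < ⊤) :
    ∃ M₀ : ℝ, 0 ≤ M₀ ∧ ∀ ε : ℝ, 0 < ε →
      ∃ (F : Finset ℕ) (c : ℕ → RN N) (r : ℕ → ℝ),
        (∀ i ∈ F, 0 < r i ∧ r i < ε) ∧ (s ⊆ ⋃ i ∈ F, ball (c i) (r i)) ∧
        ∑ i ∈ F, r i ^ (N - 1) ≤ M₀ := by
  have hd : ((N : ℝ) - 1) = ((N - 1 : ℕ) : ℝ) := by
    rw [Nat.cast_sub (by omega : 1 ≤ N)]; simp
  set m := N - 1 with hm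
  set H : ℝ := (μH[(N : ℝ) - 1] s + 1).toReal with hH
  have hH0 : 0 ≤ H := ENNReal.toReal_nonneg
  refine ⟨2 ^ m * (H + 2), by positivity, fun ε hε => ?_⟩
  -- get a countable cover at scale ε/2
  have hkey : ⨅ (t : ℕ → Set (RN N)) (_ : s ⊆ ⋃ n, t n)
      (_ : ∀ n, EMetric.diam (t n) ≤ ENNReal.ofReal (ε / 2)),
      ∑' n, ⨆ _ : (t n).Nonempty, EMetric.diam (t n) ^ ((N : ℝ) - 1)
      ≤ μH[(N : ℝ) - 1] s := by
    rw [Measure.hausdorffMeasure_apply]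
    exact le_iSup₂ (f := fun (r : ℝ≥0∞) (_ : 0 < r) => ⨅ (t : ℕ → Set (RN N)) (_ : s ⊆ ⋃ n, t n)
      (_ : ∀ n, EMetric.diam (t n) ≤ r),
      ∑' n, ⨆ _ : (t n).Nonempty, EMetric.diam (t n) ^ ((N : ℝ) - 1))
      (ENNReal.ofReal (ε / 2)) (by positivity)
  have hlt : ⨅ (t : ℕ → Set (RN N)) (_ : s ⊆ ⋃ n, t n)
      (_ : ∀ n, EMetric.diam (t n) ≤ ENNReal.ofReal (ε / 2)),
      ∑' n, ⨆ _ : (t n).Nonempty, EMetric.diam (t n) ^ ((N : ℝ) - 1)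
      < μH[(N : ℝ) - 1] s + 1 :=
    hkey.trans_lt (ENNReal.lt_add_right hfin.ne one_ne_zero)
  rw [iInf_lt_iff] at hlt
  obtain ⟨t, hlt⟩ := hlt
  rw [iInf_lt_iff] at hlt
  obtain ⟨hcov, hlt⟩ := hlt
  rw [iInf_lt_iff] at hlt
  obtain ⟨hdiam, hsum⟩ := hlt
  -- build balls
  classical
  set δ : ℝ := min 1 (ε / 4) with hδdef
  have hδ0 : 0 < δ := lt_min one_pos (by positivity)
  have hδ1 : δ ≤ 1 := min_le_left _ _
  have hδε : δ ≤ ε / 4 := min_le_right _ _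
  set a : ℕ → ℝ := fun n => if h : (t n).Nonempty then (EMetric.diam (t n)).toReal else 0
    with ha
  set c : ℕ → RN N := fun n => if h : (t n).Nonempty then h.choose else 0 with hc
  set r : ℕ → ℝ := fun n => a n + δ * (1 / 2) ^ n with hr
  have ha0 : ∀ n, 0 ≤ a n := by
    intro n; by_cases h : (t n).Nonempty <;> simp [ha, h, ENNReal.toReal_nonneg]
  have haε : ∀ n, a n ≤ ε / 2 := by
    intro n; by_cases h : (t n).Nonempty
    · simp only [ha, dif_pos h]
      exact ENNReal.toReal_le_of_le_ofReal (by positivity) (hdiam n)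
    · simp only [ha, dif_neg h]; positivity
  have hr0 : ∀ n, 0 < r n := fun n => by
    have : (0:ℝ) < δ * (1 / 2) ^ n := by positivity
    simp only [hr]; linarith [ha0 n]
  have hrε : ∀ n, r n < ε := fun n => by
    have h1 : δ * (1 / 2) ^ n ≤ δ * 1 := by
      apply mul_le_mul_of_nonneg_left _ hδ0.le
      apply pow_le_one₀ (by norm_num) (by norm_num)
    have := haε n
    simp only [hr]; nlinarith
  have hdiam_ne : ∀ n, EMetric.diam (t n) ≠ ⊤ := fun n =>
    ((hdiam n).trans_lt ENNReal.ofReal_lt_top).ne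
  have hcov2 : s ⊆ ⋃ n : ℕ, ball (c n) (r n) := by
    intro x hx
    obtain ⟨n, hxn⟩ := mem_iUnion.1 (hcov hx)
    have hne : (t n).Nonempty := ⟨x, hxn⟩
    have hcn : c n ∈ t n := by rw [hc]; simp only [dif_pos hne]; exact hne.choose_spec
    have hdist : dist x (c n) ≤ a n := by
      have h1 : edist x (c n) ≤ EMetric.diam (t n) := EMetric.edist_le_diam_of_mem hxn hcn
      have h2 : dist x (c n) = (edist x (c n)).toReal := by rw [dist_edist]
      rw [h2, ha]; simp only [dif_pos hne]
      exact ENNReal.toReal_mono (hdiam_ne n) h1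
    refine mem_iUnion.2 ⟨n, ?_⟩
    have : (0:ℝ) < δ * (1 / 2) ^ n := by positivity
    simp only [mem_ball, hr]; linarith
  obtain ⟨F, hF⟩ := hs.elim_finite_subcover (fun n => ball (c n) (r n))
    (fun n => isOpen_ball) hcov2
  refine ⟨F, c, r, fun i _ => ⟨hr0 i, hrε i⟩, by simpa using hF, ?_⟩
  -- the sum estimate
  have hm1 : 1 ≤ m := by omega
  have hstep : ∀ i, r i ^ m ≤ 2 ^ m * (a i ^ m + (δ * (1 / 2) ^ i) ^ m) := by
    intro i
    set b := δ * (1 / 2) ^ i with hb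
    have hb0 : 0 ≤ b := by positivity
    have h1 : r i ≤ 2 * max (a i) b := by
      simp only [hr, two_mul]
      exact add_le_add (le_max_left _ _) (le_max_right _ _)
    calc r i ^ m ≤ (2 * max (a i) b) ^ m :=
          pow_le_pow_left₀ (hr0 i).le h1 m
      _ = 2 ^ m * (max (a i) b) ^ m := mul_pow _ _ _
      _ ≤ 2 ^ m * (a i ^ m + b ^ m) := by
          apply mul_le_mul_of_nonneg_left _ (by positivity)
          rcases max_cases (a i) b with ⟨h, _⟩ | ⟨h, _⟩ <;> rw [h] <;>
            [nlinarith [pow_nonneg hb0 m]; nlinarith [pow_nonneg (ha0 i) m]]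
  have hsumA : ∑ i ∈ F, a i ^ m ≤ H := by
    have heq : ∀ i, a i ^ m
        = (⨆ _ : (t i).Nonempty, EMetric.diam (t i) ^ ((N : ℝ) - 1)).toReal := by
      intro i
      have hm0 : m ≠ 0 := by omega
      by_cases h : (t i).Nonempty
      · simp only [ha, dif_pos h, iSup_pos h, hd, ENNReal.rpow_natCast,
          ENNReal.toReal_pow]
      · simp [ha, dif_neg h, h, zero_pow hm0]
    calc ∑ i ∈ F, a i ^ m
        = (∑ i ∈ F, ⨆ _ : (t i).Nonempty, EMetric.diam (t i) ^ ((N : ℝ) - 1)).toReal := by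
          rw [ENNReal.toReal_sum]
          · exact Finset.sum_congr rfl fun i _ => heq i
          · intro i _
            by_cases h : (t i).Nonempty
            · simp only [iSup_pos h]
              exact (ENNReal.rpow_lt_top_of_nonneg (by rw [hd]; positivity)
                (hdiam_ne i)).ne
            · simp [h]
      _ ≤ (∑' i, ⨆ _ : (t i).Nonempty, EMetric.diam (t i) ^ ((N : ℝ) - 1)).toReal := by
          exact ENNReal.toReal_mono (ne_top_of_lt hsum) (ENNReal.sum_le_tsum F)
      _ ≤ H :=
          ENNReal.toReal_mono (ENNReal.add_lt_top.2 ⟨hfin, ENNReal.one_lt_top⟩).ne hsum.le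
  have hsumB : ∑ i ∈ F, (δ * (1 / 2) ^ i) ^ m ≤ 2 := by
    have h1 : ∀ i, (δ * (1 / 2) ^ i) ^ m ≤ δ * (1 / 2) ^ i := by
      intro i
      apply pow_le_of_le_one (by positivity) _ (by omega)
      calc δ * (1 / 2) ^ i ≤ 1 * 1 := by
            apply mul_le_mul hδ1 (pow_le_one₀ (by norm_num) (by norm_num)) (by positivity)
              (by norm_num)
        _ = 1 := by norm_num
    calc ∑ i ∈ F, (δ * (1 / 2) ^ i) ^ m ≤ ∑ i ∈ F, δ * (1 / 2) ^ i :=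
          Finset.sum_le_sum fun i _ => h1 i
      _ = δ * ∑ i ∈ F, (1 / 2 : ℝ) ^ i := by rw [Finset.mul_sum]
      _ ≤ δ * 2 := by
          apply mul_le_mul_of_nonneg_left _ hδ0.le
          have h2 := Summable.sum_le_tsum F (fun i _ => by positivity : ∀ i ∉ F, (0:ℝ) ≤ (1/2)^i)
            summable_geometric_two
          exact h2.trans_eq tsum_geometric_two
      _ ≤ 2 := by nlinarith
  calc ∑ i ∈ F, r i ^ m ≤ ∑ i ∈ F, 2 ^ m * (a i ^ m + (δ * (1 / 2) ^ i) ^ m) :=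
        Finset.sum_le_sum fun i _ => hstep i
    _ = 2 ^ m * (∑ i ∈ F, a i ^ m + ∑ i ∈ F, (δ * (1 / 2) ^ i) ^ m) := by
        rw [← Finset.mul_sum, Finset.sum_add_distrib]
    _ ≤ 2 ^ m * (H + 2) := by
        apply mul_le_mul_of_nonneg_left _ (by positivity)
        exact add_le_add hsumA hsumB







/-- The standard bump: `1` on `closedBall 0 1`, supported in `ball 0 2`. -/
def stdBump (N : ℕ) : ContDiffBump (0 : RN N) := ⟨1, 2, one_pos, one_lt_two⟩

/-- Scaled bump centered at `x₀`, scale `r`. -/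
def sBump {N : ℕ} (x₀ : RN N) (r : ℝ) : RN N → ℝ := fun x => stdBump N (r⁻¹ • (x - x₀))

lemma sBump_contDiff {N : ℕ} (x₀ : RN N) (r : ℝ) : ContDiff ℝ 1 (sBump x₀ r) := by
  exact ((stdBump N).contDiff (n := 1)).comp
    ((contDiff_id.sub contDiff_const).const_smul r⁻¹)

lemma sBump_nonneg {N : ℕ} (x₀ : RN N) (r : ℝ) (x : RN N) : 0 ≤ sBump x₀ r x :=
  (stdBump N).nonneg

lemma sBump_le_one {N : ℕ} (x₀ : RN N) (r : ℝ) (x : RN N) : sBump x₀ r x ≤ 1 :=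
  (stdBump N).le_one

lemma sBump_eq_one {N : ℕ} (x₀ : RN N) {r : ℝ} (hr : 0 < r) {x : RN N} (hx : x ∈ ball x₀ r) :
    sBump x₀ r x = 1 := by
  apply (stdBump N).one_of_mem_closedBall
  have : ‖r⁻¹ • (x - x₀)‖ ≤ 1 := by
    rw [norm_smul, norm_inv, Real.norm_eq_abs, abs_of_pos hr]
    rw [mem_ball, dist_eq_norm] at hx
    rw [inv_mul_le_iff₀ hr]
    linarith
  simpa [stdBump, mem_closedBall, dist_eq_norm] using this

lemma sBump_zero {N : ℕ} (x₀ : RN N) {r : ℝ} (hr : 0 < r) {x : RN N}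
    (hx : x ∉ closedBall x₀ (2 * r)) : sBump x₀ r x = 0 := by
  apply (stdBump N).zero_of_le_dist
  rw [mem_closedBall, dist_eq_norm, not_le] at hx
  have : (2 : ℝ) ≤ ‖r⁻¹ • (x - x₀)‖ := by
    rw [norm_smul, norm_inv, Real.norm_eq_abs, abs_of_pos hr]
    rw [le_inv_mul_iff₀ hr]
    linarith
  simpa [stdBump, dist_eq_norm] using this

lemma sBump_tsupport {N : ℕ} (x₀ : RN N) {r : ℝ} (hr : 0 < r) :
    tsupport (sBump x₀ r) ⊆ closedBall x₀ (2 * r) := by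
  apply closure_minimal _ Metric.isClosed_closedBall
  intro x hx
  by_contra h
  exact hx (sBump_zero x₀ hr h)

/-- A universal Lipschitz-type constant for the standard bump. -/
def bumpC (N : ℕ) : ℝ :=
  ((((stdBump N).hasCompactSupport.fderiv (𝕜 := ℝ)).exists_bound_of_continuous
    (((stdBump N).contDiff (n := (2:ℕ))).continuous_fderiv (by norm_num))).choose) ⊔ 0

lemma bumpC_nonneg (N : ℕ) : 0 ≤ bumpC N := le_sup_right

lemma bumpC_spec (N : ℕ) (y : RN N) : ‖fderiv ℝ (stdBump N) y‖ ≤ bumpC N :=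
  le_sup_of_le_left ((((stdBump N).hasCompactSupport.fderiv (𝕜 := ℝ)).exists_bound_of_continuous
    (((stdBump N).contDiff (n := (2:ℕ))).continuous_fderiv (by norm_num))).choose_spec y)

lemma sBump_fderiv_norm {N : ℕ} (x₀ : RN N) {r : ℝ} (hr : 0 < r) (x : RN N) :
    ‖fderiv ℝ (sBump x₀ r) x‖ ≤ bumpC N / r := by
  have hA : HasFDerivAt (fun x : RN N => r⁻¹ • (x - x₀))
      (r⁻¹ • ContinuousLinearMap.id ℝ (RN N)) x :=
    ((hasFDerivAt_id x).sub_const x₀).const_smul r⁻¹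
  have hb : HasFDerivAt (stdBump N) (fderiv ℝ (stdBump N) (r⁻¹ • (x - x₀))) _ :=
    (((stdBump N).contDiff (n := 1)).differentiable (by norm_num)).differentiableAt.hasFDerivAt
  have hcomp := hb.comp x hA
  have : fderiv ℝ (sBump x₀ r) x
      = (fderiv ℝ (stdBump N) (r⁻¹ • (x - x₀))).comp (r⁻¹ • ContinuousLinearMap.id ℝ (RN N)) :=
    hcomp.fderiv
  rw [this]
  calc ‖(fderiv ℝ (stdBump N) (r⁻¹ • (x - x₀))).comp (r⁻¹ • ContinuousLinearMap.id ℝ (RN N))‖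
      ≤ ‖fderiv ℝ (stdBump N) (r⁻¹ • (x - x₀))‖ * ‖r⁻¹ • ContinuousLinearMap.id ℝ (RN N)‖ :=
        ContinuousLinearMap.opNorm_comp_le _ _
    _ ≤ (bumpC N) * r⁻¹ := by
        apply mul_le_mul (bumpC_spec N _) _ (norm_nonneg _) (bumpC_nonneg N)
        calc ‖r⁻¹ • ContinuousLinearMap.id ℝ (RN N)‖
            = ‖r⁻¹‖ * ‖ContinuousLinearMap.id ℝ (RN N)‖ :=
              norm_smul r⁻¹ (ContinuousLinearMap.id ℝ (RN N))
          _ ≤ r⁻¹ * 1 := by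
              apply mul_le_mul _ ContinuousLinearMap.norm_id_le (norm_nonneg _)
                (by positivity)
              rw [norm_inv, Real.norm_eq_abs, abs_of_pos hr]
          _ = r⁻¹ := mul_one _
    _ = bumpC N / r := by rw [div_eq_mul_inv]





/-- Product of `C¹` functions with values in `[0,1]`: regularity, bounds,
and a derivative bound. -/
lemma prod_cutoff {N : ℕ} {ι : Type*} (F : Finset ι) (f : ι → RN N → ℝ)
    (hf : ∀ j ∈ F, ContDiff ℝ 1 (f j)) (h0 : ∀ j ∈ F, ∀ x, 0 ≤ f j x)
    (h1 : ∀ j ∈ F, ∀ x, f j x ≤ 1) :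
    ContDiff ℝ 1 (fun x => ∏ j ∈ F, f j x) ∧
    (∀ x, 0 ≤ ∏ j ∈ F, f j x) ∧ (∀ x, ∏ j ∈ F, f j x ≤ 1) ∧
    (∀ x, ‖fderiv ℝ (fun x => ∏ j ∈ F, f j x) x‖ ≤ ∑ j ∈ F, ‖fderiv ℝ (f j) x‖) := by
  classical
  induction F using Finset.induction_on with
  | empty =>
      refine ⟨by simpa using contDiff_const, by simp, by simp, ?_⟩
      intro x
      simp only [Finset.prod_empty, Finset.sum_empty]
      rw [fderiv_fun_const]
      simp
  | insert _ _ ha ih =>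
      rename_i a s
      obtain ⟨ihc, ih0, ih1, ihd⟩ := ih (fun j hj => hf j (Finset.mem_insert_of_mem hj))
        (fun j hj => h0 j (Finset.mem_insert_of_mem hj))
        (fun j hj => h1 j (Finset.mem_insert_of_mem hj))
      have hfa : ContDiff ℝ 1 (f a) := hf a (Finset.mem_insert_self a s)
      have hkey : (fun x => ∏ j ∈ insert a s, f j x)
          = fun x => f a x * ∏ j ∈ s, f j x := by
        funext x; rw [Finset.prod_insert ha]
      rw [hkey]
      refine ⟨hfa.mul ihc, ?_, ?_, ?_⟩
      · intro x
        rw [Finset.prod_insert ha]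
        exact mul_nonneg (h0 a (Finset.mem_insert_self a s) x) (ih0 x)
      · intro x
        rw [Finset.prod_insert ha]
        calc f a x * ∏ j ∈ s, f j x ≤ 1 * 1 :=
              mul_le_mul (h1 a (Finset.mem_insert_self a s) x) (ih1 x) (ih0 x) one_pos.le
          _ = 1 := one_mul 1
      · intro x
        have hda : DifferentiableAt ℝ (f a) x :=
          (hfa.differentiable (by norm_num)).differentiableAt
        have hds : DifferentiableAt ℝ (fun x => ∏ j ∈ s, f j x) x :=
          (ihc.differentiable (by norm_num)).differentiableAt
        rw [fderiv_fun_mul hda hds, Finset.sum_insert ha]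
        calc ‖f a x • fderiv ℝ (fun x => ∏ j ∈ s, f j x) x
              + (∏ j ∈ s, f j x) • fderiv ℝ (f a) x‖
            ≤ ‖f a x • fderiv ℝ (fun x => ∏ j ∈ s, f j x) x‖
              + ‖(∏ j ∈ s, f j x) • fderiv ℝ (f a) x‖ := norm_add_le _ _
          _ ≤ ‖fderiv ℝ (fun x => ∏ j ∈ s, f j x) x‖ + ‖fderiv ℝ (f a) x‖ := by
              apply add_le_add
              · rw [norm_smul]
                calc ‖f a x‖ * ‖fderiv ℝ (fun x => ∏ j ∈ s, f j x) x‖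
                    ≤ 1 * ‖fderiv ℝ (fun x => ∏ j ∈ s, f j x) x‖ := by
                      apply mul_le_mul_of_nonneg_right _ (norm_nonneg _)
                      rw [Real.norm_eq_abs, abs_of_nonneg (h0 a (Finset.mem_insert_self a s) x)]
                      exact h1 a (Finset.mem_insert_self a s) x
                  _ = _ := one_mul _
              · rw [norm_smul]
                calc ‖∏ j ∈ s, f j x‖ * ‖fderiv ℝ (f a) x‖
                    ≤ 1 * ‖fderiv ℝ (f a) x‖ := by
                      apply mul_le_mul_of_nonneg_right _ (norm_nonneg _)
                      rw [Real.norm_eq_abs, abs_of_nonneg (ih0 x)]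
                      exact ih1 x
                  _ = _ := one_mul _
          _ ≤ ∑ j ∈ s, ‖fderiv ℝ (f j) x‖ + ‖fderiv ℝ (f a) x‖ :=
              add_le_add_left (ihd x) _
          _ = ‖fderiv ℝ (f a) x‖ + ∑ j ∈ s, ‖fderiv ℝ (f j) x‖ := add_comm _ _






lemma euclid_sum_single {N : ℕ} (v : RN N) :
    v = ∑ i, v i • EuclideanSpace.single i (1 : ℝ) := by
  ext j
  rw [WithLp.ofLp_sum, Fintype.sum_apply]
  simp [EuclideanSpace.single_apply]

lemma divg_smul {N : ℕ} (η : RN N → ℝ) (g : RN N → RN N) (x : RN N)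
    (hη : DifferentiableAt ℝ η x) (hg : DifferentiableAt ℝ g x) :
    divg (fun y => η y • g y) x = η x * divg g x + fderiv ℝ η x (g x) := by
  rw [divg, fderiv_fun_smul hη hg]
  have : ∀ i : Fin N,
      (η x • fderiv ℝ g x + (fderiv ℝ η x).smulRight (g x)) (EuclideanSpace.single i 1) i
      = η x * fderiv ℝ g x (EuclideanSpace.single i 1) i
        + fderiv ℝ η x (EuclideanSpace.single i 1) * g x i := by
    intro i
    simp [ContinuousLinearMap.add_apply, ContinuousLinearMap.smul_apply,
      ContinuousLinearMap.smulRight_apply]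
  have h2 : fderiv ℝ η x (g x)
      = ∑ i, fderiv ℝ η x (EuclideanSpace.single i 1) * g x i := by
    conv_lhs => rw [euclid_sum_single (g x)]
    rw [map_sum]
    apply Finset.sum_congr rfl
    intro i _
    rw [_root_.map_smul]
    simp [mul_comm]
  rw [Finset.sum_congr rfl fun i _ => this i, Finset.sum_add_distrib, h2]
  congr 1
  rw [divg, Finset.mul_sum]

/-- Continuity of the divergence of a `C¹` field. -/
lemma divg_continuous {N : ℕ} (g : RN N → RN N) (hg : ContDiff ℝ 1 g) :
    Continuous (divg g) := by
  apply continuous_finset_sum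
  intro i _
  have h1 : Continuous fun x => fderiv ℝ g x := hg.continuous_fderiv (by norm_num)
  have h2 : Continuous fun x => fderiv ℝ g x (EuclideanSpace.single i 1) := by
    exact (ContinuousLinearMap.apply ℝ (RN N) (EuclideanSpace.single i 1)).continuous.comp h1
  exact (EuclideanSpace.proj i).continuous.comp h2

lemma divg_bound {N : ℕ} (g : RN N → RN N) (hg : ContDiff ℝ 1 g)
    (hgs : HasCompactSupport g) : ∃ K : ℝ, 0 ≤ K ∧ ∀ x, |divg g x| ≤ K := by
  have hsupp : HasCompactSupport (divg g) := by
    have hsub : Function.support (divg g) ⊆ tsupport (fderiv ℝ g) := by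
      intro x hx
      apply subset_closure
      simp only [Function.mem_support, divg, ne_eq] at hx ⊢
      intro h
      apply hx
      apply Finset.sum_eq_zero
      intro i _
      rw [h]
      simp
    exact (hgs.fderiv (𝕜 := ℝ)).mono' hsub
  obtain ⟨K, hK⟩ := hsupp.exists_bound_of_continuous (divg_continuous g hg)
  exact ⟨K ⊔ 0, le_sup_right, fun x => le_sup_of_le_left (by simpa using hK x)⟩

/-- Gluing `η • g` on `Ω` with `0` outside, when `η` vanishes near `∂Ω`. -/
lemma glue_lemma {N : ℕ} (Ω V : Set (RN N)) (hΩo : IsOpen Ω)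
    (hΩb : Bornology.IsBounded Ω) (hVo : IsOpen V) (hfr : frontier Ω ⊆ V)
    (η : RN N → ℝ) (hηC : ContDiff ℝ 1 η) (hη0 : ∀ x ∈ V, η x = 0)
    (hη01 : ∀ x, 0 ≤ η x ∧ η x ≤ 1)
    (g : RN N → RN N) (hgC : ContDiff ℝ 1 g) (hgb : ∀ x, ‖g x‖ ≤ 1) :
    ∃ h : RN N → RN N, ContDiff ℝ 1 h ∧ HasCompactSupport h ∧ tsupport h ⊆ Ω ∧
      (∀ x, ‖h x‖ ≤ 1) ∧
      (∀ x ∈ Ω, fderiv ℝ h x = fderiv ℝ (fun y => η y • g y) x) := by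
  classical
  set h : RN N → RN N := fun x => if x ∈ Ω then η x • g x else 0 with hh
  have heqΩ : ∀ x ∈ Ω, h =ᶠ[𝓝 x] fun y => η y • g y := fun x hx =>
    eventually_of_mem (hΩo.mem_nhds hx) fun y hy => by simp [hh, if_pos hy]
  have hzeroV : ∀ y ∈ V, h y = 0 := by
    intro y hy
    by_cases hyΩ : y ∈ Ω
    · simp [hh, if_pos hyΩ, hη0 y hy]
    · simp [hh, if_neg hyΩ]
  have heqV : ∀ x ∈ V, h =ᶠ[𝓝 x] fun _ => 0 :=
    fun x hx => eventually_of_mem (hVo.mem_nhds hx) fun y hy => hzeroV y hy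
  have heqC : ∀ x ∉ closure Ω, h =ᶠ[𝓝 x] fun _ => 0 := fun x hx =>
    eventually_of_mem ((isClosed_closure.isOpen_compl).mem_nhds hx) fun y hy => by
      have : y ∉ Ω := fun h' => hy (subset_closure h')
      simp [hh, if_neg this]
  have hcover : ∀ x : RN N, x ∈ Ω ∨ x ∈ V ∨ x ∉ closure Ω := by
    intro x
    by_cases h1 : x ∈ Ω
    · exact Or.inl h1
    by_cases h2 : x ∈ closure Ω
    · exact Or.inr (Or.inl (hfr ⟨h2, by simpa [hΩo.interior_eq] using h1⟩))
    · exact Or.inr (Or.inr h2)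
  have hC : ContDiff ℝ 1 h := by
    rw [contDiff_iff_contDiffAt]
    intro x
    rcases hcover x with hx | hx | hx
    · exact ((hηC.smul hgC).contDiffAt).congr_of_eventuallyEq (heqΩ x hx)
    · exact contDiffAt_const.congr_of_eventuallyEq (heqV x hx)
    · exact contDiffAt_const.congr_of_eventuallyEq (heqC x hx)
  have hts : tsupport h ⊆ Ω := by
    have h1 : tsupport h ⊆ closure Ω := by
      apply closure_mono
      intro x hx
      by_contra hxΩ
      exact hx (by simp [hh, if_neg hxΩ])
    have h2 : tsupport h ⊆ Vᶜ := by
      apply closure_minimal _ (hVo.isClosed_compl)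
      intro x hx hxV
      exact hx (hzeroV x hxV)
    intro x hx
    rcases (h1 hx : x ∈ closure Ω) |>.out with hcl
    by_contra hxΩ
    exact h2 hx (hfr ⟨hcl, by simpa [hΩo.interior_eq] using hxΩ⟩)
  refine ⟨h, hC, ?_, hts, ?_, ?_⟩
  · exact IsCompact.of_isClosed_subset hΩb.isCompact_closure isClosed_closure
      (hts.trans subset_closure)
  · intro x
    by_cases hx : x ∈ Ω
    · simp only [hh, if_pos hx]
      rw [norm_smul]
      calc ‖η x‖ * ‖g x‖ ≤ 1 * 1 := by
            apply mul_le_mul _ (hgb x) (norm_nonneg _) one_pos.le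
            rw [Real.norm_eq_abs, abs_of_nonneg (hη01 x).1]
            exact (hη01 x).2
        _ = 1 := one_mul 1
    · simp [hh, if_neg hx]
  · intro x hx
    exact (heqΩ x hx).fderiv_eq


set_option maxHeartbeats 2000000 in
/-- First case of the proof of Theorem `easycase`: if `ℋ^{N-1}(∂Ω) < ∞` and
`u ∈ L^∞(Ω)` has bounded variation on `Ω`, then `u ∈ BV(ℝ^N)`. -/
theorem extension_Linfty_finite_boundary (N : ℕ) (hN : 2 ≤ N) (Ω : Set (RN N))
    (hΩo : IsOpen Ω) (hΩb : Bornology.IsBounded Ω)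
    (hb : μH[(N : ℝ) - 1] (frontier Ω) < ⊤)
    (u : RN N → ℝ) (hum : Measurable u) (hu0 : ∀ x ∉ Ω, u x = 0)
    (huL : MemLp u ⊤ (volume.restrict Ω)) (hvar : totVar u Ω < ⊤) :
    Integrable u volume ∧ totVar u univ < ⊤ := by
  classical
  have hΩm : MeasurableSet Ω := hΩo.measurableSet
  have hvol : volume Ω < ⊤ := by
    obtain ⟨R, hR⟩ := hΩb.subset_closedBall 0
    calc volume Ω ≤ volume (closedBall (0 : RN N) R) := measure_mono hR
      _ < ⊤ := measure_closedBall_lt_top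
  -- the essential sup bound
  set C : ℝ := (eLpNormEssSup u (volume.restrict Ω)).toReal with hCdef
  have hC0 : 0 ≤ C := ENNReal.toReal_nonneg
  have hCfin : eLpNormEssSup u (volume.restrict Ω) < ⊤ := by
    have := huL.2
    rwa [eLpNorm_exponent_top] at this
  have hCae : ∀ᵐ x ∂(volume.restrict Ω), |u x| ≤ C := by
    filter_upwards [ae_le_eLpNormEssSup (f := u) (μ := volume.restrict Ω)] with x hx
    have : ((‖u x‖₊ : ℝ≥0∞)).toReal ≤ C := ENNReal.toReal_mono hCfin.ne hx
    simpa [Real.norm_eq_abs] using this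
  have hCae' : ∀ᵐ x ∂volume, x ∈ Ω → |u x| ≤ C := (ae_restrict_iff' hΩm).1 hCae
  -- Part 1 : integrability
  have hInt : Integrable u volume := by
    apply Integrable.mono' (g := Ω.indicator fun _ => C)
    · rw [integrable_indicator_iff hΩm]
      exact integrableOn_const hvol.ne
    · exact hum.aestronglyMeasurable
    · filter_upwards [hCae'] with x hx
      by_cases hxΩ : x ∈ Ω
      · simpa [Real.norm_eq_abs, Set.indicator_of_mem hxΩ] using hx hxΩ
      · simp [Real.norm_eq_abs, hu0 x hxΩ, Set.indicator_of_notMem hxΩ]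
  refine ⟨hInt, ?_⟩
  -- Part 2 : bounded variation on ℝ^N
  set ι' : ℝ := (volume (ball (0 : RN N) 1)).toReal with hι'def
  have hι'0 : 0 ≤ ι' := ENNReal.toReal_nonneg
  have hfrc : IsCompact (frontier Ω) :=
    IsCompact.of_isClosed_subset hΩb.isCompact_closure isClosed_frontier
      frontier_subset_closure
  obtain ⟨M₀, hM₀0, hcover⟩ := cover_lemma N hN (frontier Ω) hfrc hb
  set c₁ : ℝ := C * (2 ^ N * bumpC N * M₀ * ι') with hc₁def
  set Z : ℝ≥0∞ := totVar u Ω + ENNReal.ofReal c₁ with hZdef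
  have hZfin : Z < ⊤ := ENNReal.add_lt_top.2 ⟨hvar, ENNReal.ofReal_lt_top⟩
  -- helper : integrability of `u * φ` on `Ω` for bounded continuous `φ`.
  have intOf : ∀ (φ : RN N → ℝ), Continuous φ → (∀ K' : ℝ, (∀ x, |φ x| ≤ K') →
      IntegrableOn (fun x => u x * φ x) Ω volume) := by
    intro φ hφ K' hK'
    have hK'0 : 0 ≤ K' := le_trans (abs_nonneg _) (hK' 0)
    apply Integrable.mono' (g := fun _ => C * K')
    · exact integrableOn_const hvol.ne
    · exact ((hum.mul hφ.measurable).aestronglyMeasurable).restrict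
    · filter_upwards [hCae] with x hx
      rw [Real.norm_eq_abs, abs_mul]
      exact mul_le_mul hx (hK' x) (abs_nonneg _) hC0
  -- Main claim
  have main : ∀ gg : RN N → RN N, ContDiff ℝ 1 gg → HasCompactSupport gg →
      (∀ x, ‖gg x‖ ≤ 1) → ENNReal.ofReal (∫ x in Ω, u x * divg gg x) ≤ Z := by
    intro g hgC hgs hgb
    obtain ⟨K, hK0, hKb⟩ := divg_bound g hgC hgs
    have int1 : IntegrableOn (fun x => u x * divg g x) Ω volume :=
      intOf (divg g) (divg_continuous g hgC) K hKb
    apply ENNReal.le_of_forall_pos_le_add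
    intro ε' hε' _
    set cK : ℝ := C * (2 ^ N * K * M₀ * ι') with hcKdef
    have hcK0 : 0 ≤ cK := by positivity
    set ε : ℝ := (ε' : ℝ) / (cK + 1) with hεdef
    have hε'R : (0:ℝ) < ε' := hε'
    have hε : 0 < ε := div_pos hε'R (by linarith)
    obtain ⟨F, c, r, hrr, hFr, hFsum⟩ := hcover ε hε
    -- cutoff construction
    set ψ : ℕ → RN N → ℝ := fun i => sBump (c i) (r i) with hψdef
    set f : ℕ → RN N → ℝ := fun i x => 1 - ψ i x with hfdef
    set η : RN N → ℝ := fun x => ∏ i ∈ F, f i x with hηdef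
    have hPC := prod_cutoff F f
      (fun j _ => contDiff_const.sub (sBump_contDiff (c j) (r j)))
      (fun j _ x => by simp only [hfdef]; linarith [sBump_le_one (c j) (r j) x])
      (fun j _ x => by simp only [hfdef]; linarith [sBump_nonneg (c j) (r j) x])
    have ηC : ContDiff ℝ 1 η := hPC.1
    have η0 : ∀ x, 0 ≤ η x := hPC.2.1
    have η1 : ∀ x, η x ≤ 1 := hPC.2.2.1
    have ηd : ∀ x, ‖fderiv ℝ η x‖ ≤ ∑ i ∈ F, ‖fderiv ℝ (f i) x‖ := hPC.2.2.2
    set V : Set (RN N) := ⋃ i ∈ F, ball (c i) (r i) with hVdef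
    set W : Set (RN N) := ⋃ i ∈ F, closedBall (c i) (2 * r i) with hWdef
    have hVo : IsOpen V := isOpen_biUnion fun i _ => isOpen_ball
    have hWc : IsClosed W :=
      Set.Finite.isClosed_biUnion F.finite_toSet fun i _ => Metric.isClosed_closedBall
    have hWm : MeasurableSet W := hWc.measurableSet
    have hWvol : volume W < ⊤ := by
      refine (measure_biUnion_finset_le F _).trans_lt (ENNReal.sum_lt_top.2 ?_)
      intro i _
      exact measure_closedBall_lt_top
    have hηV : ∀ x ∈ V, η x = 0 := by
      intro x hx
      obtain ⟨i, hi, hxi⟩ := mem_iUnion₂.1 hx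
      refine Finset.prod_eq_zero hi ?_
      simp only [hfdef, hψdef]
      rw [sBump_eq_one (c i) (hrr i hi).1 hxi]
      ring
    have hηW : ∀ x, x ∉ W → η x = 1 := by
      intro x hx
      refine Finset.prod_eq_one fun i hi => ?_
      have : ψ i x = 0 := by
        refine sBump_zero (c i) (hrr i hi).1 fun hmem => hx ?_
        exact mem_iUnion₂.2 ⟨i, hi, hmem⟩
      simp only [hfdef, hψdef] at this ⊢
      rw [this]; ring
    have hDηW : ∀ x, x ∉ W → fderiv ℝ η x = 0 := by
      intro x hx
      have heq : η =ᶠ[𝓝 x] fun _ => (1:ℝ) :=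
        eventually_of_mem (hWc.isOpen_compl.mem_nhds hx) fun y hy => hηW y hy
      rw [heq.fderiv_eq]
      exact fderiv_const_apply 1
    have hψd : ∀ i ∈ F, ∀ x : RN N, ‖fderiv ℝ (ψ i) x‖
        ≤ (bumpC N / r i) * (closedBall (c i) (2 * r i)).indicator (fun _ => (1:ℝ)) x := by
      intro i hi x
      by_cases hx : x ∈ closedBall (c i) (2 * r i)
      · rw [Set.indicator_of_mem hx, mul_one]
        exact sBump_fderiv_norm (c i) (hrr i hi).1 x
      · rw [Set.indicator_of_notMem hx, mul_zero]
        have h0' : fderiv ℝ (ψ i) x = 0 := by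
          by_contra hne
          exact hx (sBump_tsupport (c i) (hrr i hi).1
            (support_fderiv_subset ℝ (Function.mem_support.2 hne)))
        simp [h0']
    -- glue
    obtain ⟨h, hhC, hhs, hhts, hhb, hhfd⟩ :=
      glue_lemma Ω V hΩo hΩb hVo hFr η ηC hηV (fun x => ⟨η0 x, η1 x⟩) g hgC hgb
    obtain ⟨Kh, hKh0, hKhb⟩ := divg_bound h hhC hhs
    have int2 : IntegrableOn (fun x => u x * divg h x) Ω volume :=
      intOf (divg h) (divg_continuous h hhC) Kh hKhb
    -- the majorant
    set Φ : RN N → ℝ := fun x => K * W.indicator (fun _ => (1:ℝ)) x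
      + ∑ i ∈ F, (bumpC N / r i) * (closedBall (c i) (2 * r i)).indicator (fun _ => (1:ℝ)) x
      with hΦdef
    have hΦ0 : ∀ x, 0 ≤ Φ x := by
      intro x
      apply add_nonneg
      · exact mul_nonneg hK0 (Set.indicator_nonneg (fun _ _ => zero_le_one) x)
      · refine Finset.sum_nonneg fun i hi => mul_nonneg ?_
          (Set.indicator_nonneg (fun _ _ => zero_le_one) x)
        exact div_nonneg (bumpC_nonneg N) (hrr i hi).1.le
    have intW : Integrable (W.indicator fun _ => (1:ℝ)) volume := by
      rw [integrable_indicator_iff hWm]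
      exact integrableOn_const hWvol.ne
    have intCB : ∀ i ∈ F, Integrable
        ((closedBall (c i) (2 * r i)).indicator fun _ => (1:ℝ)) volume := by
      intro i _
      rw [integrable_indicator_iff Metric.isClosed_closedBall.measurableSet]
      exact integrableOn_const measure_closedBall_lt_top.ne
    have intΦ : Integrable Φ volume := by
      apply Integrable.add
      · exact intW.const_mul K
      · exact integrable_finset_sum F fun i hi => (intCB i hi).const_mul _
    -- pointwise bound
    have hDb : ∀ x ∈ Ω, |divg g x - divg h x| ≤ Φ x := by
      intro x hx
      have hfd : fderiv ℝ h x = fderiv ℝ (fun y => η y • g y) x := hhfd x hx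
      have hdivh : divg h x = η x * divg g x + fderiv ℝ η x (g x) := by
        have h1 : divg h x = divg (fun y => η y • g y) x := by
          simp only [divg, hfd]
        rw [h1]
        exact divg_smul η g x ((ηC.differentiable (by norm_num)).differentiableAt)
          ((hgC.differentiable (by norm_num)).differentiableAt)
      have hexp : divg g x - divg h x
          = (1 - η x) * divg g x - fderiv ℝ η x (g x) := by rw [hdivh]; ring
      rw [hexp, hΦdef]
      have hterm1 : |(1 - η x) * divg g x| ≤ K * W.indicator (fun _ => (1:ℝ)) x := by
        by_cases hxW : x ∈ W
        · rw [Set.indicator_of_mem hxW, mul_one, abs_mul]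
          calc |1 - η x| * |divg g x| ≤ 1 * K :=
                mul_le_mul (by rw [abs_of_nonneg (by linarith [η1 x])]; linarith [η0 x])
                  (hKb x) (abs_nonneg _) one_pos.le
            _ = K := one_mul K
        · rw [Set.indicator_of_notMem hxW, mul_zero, hηW x hxW]
          simp
      have hterm2 : |fderiv ℝ η x (g x)| ≤ ∑ i ∈ F, (bumpC N / r i)
          * (closedBall (c i) (2 * r i)).indicator (fun _ => (1:ℝ)) x := by
        calc |fderiv ℝ η x (g x)| = ‖fderiv ℝ η x (g x)‖ := (Real.norm_eq_abs _).symm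
          _ ≤ ‖fderiv ℝ η x‖ * ‖g x‖ := ContinuousLinearMap.le_opNorm _ _
          _ ≤ ‖fderiv ℝ η x‖ * 1 :=
              mul_le_mul_of_nonneg_left (hgb x) (norm_nonneg _)
          _ = ‖fderiv ℝ η x‖ := mul_one _
          _ ≤ ∑ i ∈ F, ‖fderiv ℝ (f i) x‖ := ηd x
          _ ≤ ∑ i ∈ F, (bumpC N / r i)
              * (closedBall (c i) (2 * r i)).indicator (fun _ => (1:ℝ)) x := by
              refine Finset.sum_le_sum fun i hi => ?_
              have hfder : fderiv ℝ (f i) x = -fderiv ℝ (ψ i) x := by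
                simp only [hfdef]
                exact fderiv_const_sub 1
              rw [hfder, norm_neg]
              exact hψd i hi x
      calc |(1 - η x) * divg g x - fderiv ℝ η x (g x)|
          = |(1 - η x) * divg g x + -(fderiv ℝ η x (g x))| := by rw [sub_eq_add_neg]
        _ ≤ |(1 - η x) * divg g x| + |-(fderiv ℝ η x (g x))| := abs_add_le _ _
        _ = |(1 - η x) * divg g x| + |fderiv ℝ η x (g x)| := by rw [abs_neg]
        _ ≤ _ := add_le_add hterm1 hterm2
    -- split the integral
    set A : ℝ := ∫ x in Ω, u x * divg h x with hAdef
    set R : ℝ := ∫ x in Ω, u x * (divg g x - divg h x) with hRdef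
    have hmulsub : (fun x => u x * (divg g x - divg h x))
        = fun x => u x * divg g x - u x * divg h x := funext fun x => mul_sub _ _ _
    have intD : IntegrableOn (fun x => u x * (divg g x - divg h x)) Ω volume := by
      rw [hmulsub]; exact int1.sub int2
    have hsplit : ∫ x in Ω, u x * divg g x = A + R := by
      have : R = (∫ x in Ω, u x * divg g x) - A := by
        rw [hRdef, hmulsub, integral_sub int1 int2, hAdef]
      linarith
    have hA : ENNReal.ofReal A ≤ totVar u Ω := by
      rw [totVar]
      exact le_iSup_of_le h (le_iSup_of_le hhC (le_iSup_of_le hhs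
        (le_iSup_of_le hhts (le_iSup_of_le hhb le_rfl))))
    -- bound R
    have hRb : R ≤ cK * ε + c₁ := by
      have hNe : N = (N - 1) + 1 := by omega
      have step2 : |R| ≤ ∫ x in Ω, |u x * (divg g x - divg h x)| := by
        rw [hRdef]
        simpa [Real.norm_eq_abs, abs_mul] using
          norm_integral_le_integral_norm (μ := volume.restrict Ω)
            (fun x => u x * (divg g x - divg h x))
      have step3 : (∫ x in Ω, |u x * (divg g x - divg h x)|) ≤ ∫ x in Ω, C * Φ x := by
        apply integral_mono_ae intD.abs ((intΦ.const_mul C).integrableOn)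
        filter_upwards [hCae, ae_restrict_mem hΩm] with x hxC hxΩ
        rw [abs_mul]
        exact mul_le_mul hxC (hDb x hxΩ) (abs_nonneg _) hC0
      have step4 : (∫ x in Ω, C * Φ x) ≤ ∫ x, C * Φ x :=
        setIntegral_le_integral (intΦ.const_mul C)
          (Filter.Eventually.of_forall fun x => mul_nonneg hC0 (hΦ0 x))
      have step5 : (∫ x, C * Φ x) = C * ∫ x, Φ x := integral_const_mul C Φ
      have hΦint : (∫ x, Φ x) = K * (volume W).toReal
          + ∑ i ∈ F, (bumpC N / r i) * (volume (closedBall (c i) (2 * r i))).toReal := by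
        have hint2 : Integrable (fun x => ∑ i ∈ F, (bumpC N / r i)
            * (closedBall (c i) (2 * r i)).indicator (fun _ => (1:ℝ)) x) volume :=
          integrable_finset_sum F fun i hi => (intCB i hi).const_mul _
        rw [hΦdef, integral_add (intW.const_mul K) hint2]
        congr 1
        · rw [integral_const_mul, integral_indicator_const _ hWm]
          simp [Measure.real]
        · rw [integral_finset_sum F (fun i hi => (intCB i hi).const_mul _)]
          refine Finset.sum_congr rfl fun i hi => ?_
          rw [integral_const_mul, integral_indicator_const _
            Metric.isClosed_closedBall.measurableSet]
          simp [Measure.real]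
      have hCBvol : ∀ i ∈ F, (volume (closedBall (c i) (2 * r i))).toReal
          = (2 * r i) ^ N * ι' := by
        intro i hi
        have h2r : (0:ℝ) ≤ 2 * r i := by linarith [(hrr i hi).1]
        rw [Measure.addHaar_closedBall volume (c i) h2r, ENNReal.toReal_mul,
          ENNReal.toReal_ofReal (by positivity), finrank_euclideanSpace_fin]
      have hWtoReal : (volume W).toReal ≤ ∑ i ∈ F, (2 * r i) ^ N * ι' := by
        have h1 : volume W ≤ ∑ i ∈ F, volume (closedBall (c i) (2 * r i)) :=
          measure_biUnion_finset_le F _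
        have h2 : (volume W).toReal
            ≤ (∑ i ∈ F, volume (closedBall (c i) (2 * r i))).toReal :=
          ENNReal.toReal_mono
            (ENNReal.sum_lt_top.2 fun i _ => measure_closedBall_lt_top).ne h1
        rw [ENNReal.toReal_sum (fun i _ => measure_closedBall_lt_top.ne)] at h2
        refine h2.trans_eq (Finset.sum_congr rfl fun i hi => hCBvol i hi)
      have hsum1 : ∑ i ∈ F, (2 * r i) ^ N * ι' ≤ 2 ^ N * ι' * (ε * M₀) := by
        have hterm : ∀ i ∈ F, (2 * r i) ^ N * ι' ≤ 2 ^ N * ε * ι' * r i ^ (N - 1) := by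
          intro i hi
          obtain ⟨hri0, hriε⟩ := hrr i hi
          have hpow : r i ^ N = r i * r i ^ (N - 1) := by
            conv_lhs => rw [hNe]
            rw [pow_succ]
            ring
          rw [mul_pow, hpow]
          have hple : r i * r i ^ (N - 1) ≤ ε * r i ^ (N - 1) :=
            mul_le_mul_of_nonneg_right hriε.le (by positivity)
          calc 2 ^ N * (r i * r i ^ (N - 1)) * ι'
              ≤ 2 ^ N * (ε * r i ^ (N - 1)) * ι' := by
                apply mul_le_mul_of_nonneg_right _ hι'0
                exact mul_le_mul_of_nonneg_left hple (by positivity)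
            _ = 2 ^ N * ε * ι' * r i ^ (N - 1) := by ring
        calc ∑ i ∈ F, (2 * r i) ^ N * ι'
            ≤ ∑ i ∈ F, 2 ^ N * ε * ι' * r i ^ (N - 1) := Finset.sum_le_sum hterm
          _ = 2 ^ N * ε * ι' * ∑ i ∈ F, r i ^ (N - 1) := by rw [Finset.mul_sum]
          _ ≤ 2 ^ N * ε * ι' * M₀ := by
              apply mul_le_mul_of_nonneg_left hFsum (by positivity)
          _ = 2 ^ N * ι' * (ε * M₀) := by ring
      have hsum2 : ∑ i ∈ F, (bumpC N / r i)
          * (volume (closedBall (c i) (2 * r i))).toReal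
          ≤ 2 ^ N * bumpC N * M₀ * ι' := by
        have hterm : ∀ i ∈ F, (bumpC N / r i)
            * (volume (closedBall (c i) (2 * r i))).toReal
            = 2 ^ N * bumpC N * ι' * r i ^ (N - 1) := by
          intro i hi
          obtain ⟨hri0, _⟩ := hrr i hi
          rw [hCBvol i hi, mul_pow]
          have hpow : r i ^ N = r i ^ (N - 1) * r i := by
            conv_lhs => rw [hNe]
            rw [pow_succ]
          rw [hpow]
          field_simp
        calc ∑ i ∈ F, (bumpC N / r i) * (volume (closedBall (c i) (2 * r i))).toReal
            = ∑ i ∈ F, 2 ^ N * bumpC N * ι' * r i ^ (N - 1) :=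
              Finset.sum_congr rfl hterm
          _ = 2 ^ N * bumpC N * ι' * ∑ i ∈ F, r i ^ (N - 1) := by rw [Finset.mul_sum]
          _ ≤ 2 ^ N * bumpC N * ι' * M₀ := by
              apply mul_le_mul_of_nonneg_left hFsum
              have := bumpC_nonneg N
              positivity
          _ = 2 ^ N * bumpC N * M₀ * ι' := by ring
      have hfinal : C * (∫ x, Φ x) ≤ cK * ε + c₁ := by
        rw [hΦint]
        calc C * (K * (volume W).toReal + ∑ i ∈ F, (bumpC N / r i)
              * (volume (closedBall (c i) (2 * r i))).toReal)
            ≤ C * (K * (2 ^ N * ι' * (ε * M₀)) + 2 ^ N * bumpC N * M₀ * ι') := by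
              apply mul_le_mul_of_nonneg_left _ hC0
              exact add_le_add
                (mul_le_mul_of_nonneg_left (hWtoReal.trans hsum1) hK0) hsum2
          _ = cK * ε + c₁ := by rw [hcKdef, hc₁def]; ring
      calc R ≤ |R| := le_abs_self R
        _ ≤ ∫ x in Ω, |u x * (divg g x - divg h x)| := step2
        _ ≤ ∫ x in Ω, C * Φ x := step3
        _ ≤ ∫ x, C * Φ x := step4
        _ = C * ∫ x, Φ x := step5
        _ ≤ cK * ε + c₁ := hfinal
    calc ENNReal.ofReal (∫ x in Ω, u x * divg g x) = ENNReal.ofReal (A + R) := by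
          rw [hsplit]
      _ ≤ ENNReal.ofReal A + ENNReal.ofReal R := ENNReal.ofReal_add_le
      _ ≤ totVar u Ω + ENNReal.ofReal (cK * ε + c₁) :=
          add_le_add hA (ENNReal.ofReal_le_ofReal hRb)
      _ ≤ totVar u Ω + (ENNReal.ofReal (cK * ε) + ENNReal.ofReal c₁) :=
          add_le_add_right ENNReal.ofReal_add_le _
      _ = Z + ENNReal.ofReal (cK * ε) := by
          rw [hZdef, add_comm (ENNReal.ofReal (cK * ε)) (ENNReal.ofReal c₁), ← add_assoc]
      _ ≤ Z + ε' := by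
          apply add_le_add_right _ Z
          have h1 : cK * ε ≤ (ε' : ℝ) := by
            rw [hεdef]
            rw [div_eq_mul_inv, ← mul_assoc]
            calc cK * (ε' : ℝ) * (cK + 1)⁻¹ ≤ (cK + 1) * (ε' : ℝ) * (cK + 1)⁻¹ := by
                  apply mul_le_mul_of_nonneg_right _ (by positivity)
                  apply mul_le_mul_of_nonneg_right (by linarith) hε'R.le
              _ = (ε' : ℝ) := by field_simp
          calc ENNReal.ofReal (cK * ε) ≤ ENNReal.ofReal (ε' : ℝ) :=
                ENNReal.ofReal_le_ofReal h1
            _ = (ε' : ℝ≥0∞) := ENNReal.ofReal_coe_nnreal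
  -- conclude
  have : totVar u univ ≤ Z := by
    rw [totVar]
    refine iSup_le fun gg => iSup_le fun hgC => iSup_le fun hgs => iSup_le fun _ =>
      iSup_le fun hgb => ?_
    have heq : ∫ x in univ, u x * divg gg x = ∫ x in Ω, u x * divg gg x := by
      rw [Measure.restrict_univ]
      exact (setIntegral_eq_integral_of_forall_compl_eq_zero
        (fun x hx => by rw [hu0 x hx, zero_mul])).symm
    rw [heq]
    exact main gg hgC hgs hgb
  exact this.trans_lt hZfin

end
end

section
/- Let Ω ⊂ ℝ^N be a bounded open set, let u : Ω → ℝ be a Borel function extended to zero outside Ω, and for t ∈ ℝ set Ω^t = {x ∈ Ω : u(x) > t}. Then for every t > 0: {x ∈ ∂Ω : u⁺(x) > t} ⊆ (∂*Ω^t ∪ Ω^t_1) ∩ ∂Ω ⊆ {x ∈ ∂Ω : u⁺(x) ≥ t}, where Ω^t_1 is the set of points at which Ω^t has density 1 and ∂*Ω^t is the essential boundary of Ω^t. -/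
open MeasureTheory Metric Set Filter Topology ENNReal

noncomputable section

/-- Inclusion `omegatest`: for `t > 0`,
`{x ∈ ∂Ω : u⁺(x) > t} ⊆ (∂*Ω^t ∪ Ω^t₁) ∩ ∂Ω ⊆ {x ∈ ∂Ω : u⁺(x) ≥ t}`. -/
theorem superlevel_boundary_inclusions (N : ℕ) (Ω : Set (RN N)) (hΩo : IsOpen Ω)
    (hΩb : Bornology.IsBounded Ω) (u : RN N → ℝ) (hum : Measurable u)
    (hu0 : ∀ x ∉ Ω, u x = 0) (t : ℝ) (ht : 0 < t) :
    {x ∈ frontier Ω | (t : EReal) < apUpper u x} ⊆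
        (essBoundary {x ∈ Ω | t < u x} ∪ densityPts {x ∈ Ω | t < u x} 1) ∩ frontier Ω ∧
      (essBoundary {x ∈ Ω | t < u x} ∪ densityPts {x ∈ Ω | t < u x} 1) ∩ frontier Ω ⊆
        {x ∈ frontier Ω | (t : EReal) ≤ apUpper u x} := by
  classical
  set E := {x ∈ Ω | t < u x} with hEdef
  have hE : E = {y | u y > t} := by
    ext y
    simp only [hEdef, mem_setOf_eq, mem_sep_iff]
    constructor
    · rintro ⟨_, h⟩; exact h
    · intro h
      refine ⟨?_, h⟩
      by_contra hy
      rw [hu0 y hy] at h; linarith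
  have key : ∀ x, ¬ HasDensityAt E 0 x → (t : EReal) ≤ apUpper u x := by
    intro x hx
    apply le_sInf
    rintro b ⟨s, hs, rfl⟩
    rw [EReal.coe_le_coe_iff]
    by_contra hst
    push_neg at hst
    apply hx
    rw [hE]
    have hsub : {y | u y > t} ⊆ {y | u y > s} := fun y hy => lt_trans hst hy
    have hs' : Tendsto (fun ρ : ℝ => volume ({y | u y > s} ∩ ball x ρ) / volume (ball x ρ))
        (𝓝[>] 0) (𝓝 0) := by
      have := hs
      unfold HasDensityAt at this
      simpa using this
    unfold HasDensityAt
    have h0 : ENNReal.ofReal (0:ℝ) = 0 := by simp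
    rw [h0]
    refine tendsto_of_tendsto_of_tendsto_of_le_of_le tendsto_const_nhds hs'
      (fun ρ => zero_le) ?_
    intro ρ
    exact ENNReal.div_le_div_right (measure_mono (inter_subset_inter_left _ hsub)) _
  have mem_iff : ∀ x, x ∈ essBoundary E ∪ densityPts E 1 → ¬ HasDensityAt E 0 x := by
    intro x hx hx0
    rcases hx with hx | hx
    · exact hx.2 (Or.inl hx0)
    · have hx1 : HasDensityAt E 1 x := hx
      have := tendsto_nhds_unique hx0 hx1
      simp [ENNReal.ofReal_eq_zero] at this
  constructor
  · rintro x ⟨hxf, hxt⟩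
    refine ⟨?_, hxf⟩
    by_cases h1 : x ∈ densityPts E 1
    · exact Or.inr h1
    · left
      refine ⟨mem_univ x, ?_⟩
      rintro (h0 | h1')
      · have hle : apUpper u x ≤ (t : EReal) := by
          apply sInf_le
          refine ⟨t, ?_, rfl⟩
          have h0' : HasDensityAt E 0 x := h0
          rw [hE] at h0'
          exact h0'
        exact absurd hxt (not_lt.2 hle)
      · exact h1 h1'
  · rintro x ⟨hx, hxf⟩
    exact ⟨hxf, key x (mem_iff x hx)⟩

end
end

section
/- Let N ≥ 2 and let Ω ⊂ ℝ^N be a bounded open set whose boundary ∂Ω is σ-finite with respect to the ℋ^{N−1} measure. Let u : Ω → ℝ be a Borel function with u ≥ 0, extended to zero outside Ω, and for t > 0 set Ω^t = {x ∈ Ω : u(x) > t}. Then ∫_0^{+∞} ℋ^{N−1}(∂*Ω^t ∩ ∂Ω) dt ≤ ∫_{∂Ω ∩ S(u)} |u⁺(y) − u⁻(y)| dℋ^{N−1}(y). -/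
open MeasureTheory Metric Set Filter Topology ENNReal

noncomputable section

section AuxProofs
attribute [local instance] Classical.propDecidable
variable {N : ℕ}

lemma ratio_le_one (E : Set (RN N)) (y : RN N) (ρ : ℝ) :
    volume (E ∩ ball y ρ) / volume (ball y ρ) ≤ 1 :=
  ENNReal.div_le_of_le_mul (by simpa using measure_mono (inter_subset_right (s := E)))

lemma hasDensityAt_zero_mono {E F : Set (RN N)} (h : E ⊆ F) {y : RN N}
    (hF : HasDensityAt F 0 y) : HasDensityAt E 0 y := by
  have h0 : Tendsto (fun _ : ℝ => (0 : ℝ≥0∞)) (𝓝[>] (0:ℝ)) (𝓝 (ENNReal.ofReal 0)) := by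
    simpa using (tendsto_const_nhds : Tendsto (fun _ : ℝ => (0:ℝ≥0∞)) _ (𝓝 0))
  exact tendsto_of_tendsto_of_tendsto_of_le_of_le h0 hF (fun ρ => zero_le)
    (fun ρ => ENNReal.div_le_div_right (measure_mono (inter_subset_inter_left _ h)) _)

lemma hasDensityAt_one_mono {E F : Set (RN N)} (h : E ⊆ F) {y : RN N}
    (hE : HasDensityAt E 1 y) : HasDensityAt F 1 y := by
  have h1 : Tendsto (fun _ : ℝ => (1 : ℝ≥0∞)) (𝓝[>] (0:ℝ)) (𝓝 (ENNReal.ofReal 1)) := by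
    simpa using (tendsto_const_nhds : Tendsto (fun _ : ℝ => (1:ℝ≥0∞)) _ (𝓝 1))
  exact tendsto_of_tendsto_of_tendsto_of_le_of_le hE h1
    (fun ρ => ENNReal.div_le_div_right (measure_mono (inter_subset_inter_left _ h)) _)
    (fun ρ => ratio_le_one F y ρ)

lemma measurable_volume_inter_ball {E : Set (RN N)} (hE : MeasurableSet E) (r : ℝ) :
    Measurable fun y : RN N => volume (E ∩ ball y r) := by
  have hS : MeasurableSet {p : RN N × RN N | p.2 ∈ E ∧ dist p.2 p.1 < r} :=
    (measurable_snd hE).inter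
      ((isOpen_lt (continuous_snd.dist continuous_fst) continuous_const).measurableSet)
  have key : (fun y : RN N => volume (E ∩ ball y r)) = fun y =>
      ∫⁻ x, ({p : RN N × RN N | p.2 ∈ E ∧ dist p.2 p.1 < r}).indicator (fun _ => 1) (y, x) := by
    funext y
    have h1 : (fun x : RN N => ({p : RN N × RN N | p.2 ∈ E ∧ dist p.2 p.1 < r}).indicator
        (fun _ => (1:ℝ≥0∞)) (y, x)) = (E ∩ ball y r).indicator (fun _ => 1) := by
      funext x
      by_cases hx : x ∈ E ∧ dist x y < r
      · rw [indicator_of_mem (by exact hx) (fun _ => (1:ℝ≥0∞)),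
          indicator_of_mem (by exact ⟨hx.1, mem_ball.2 hx.2⟩)]
      · rw [indicator_of_notMem (by exact hx) (fun _ => (1:ℝ≥0∞)),
          indicator_of_notMem (by simpa [mem_ball, and_comm] using hx)]
    rw [h1, lintegral_indicator (hE.inter measurableSet_ball)]
    simp
  rw [key]
  exact (Measurable.indicator measurable_const hS).lintegral_prod_right'

lemma volume_ball_const (y : RN N) (r : ℝ) :
    volume (ball y r) = volume (ball (0 : RN N) r) :=
  Measure.addHaar_ball_center volume y r

lemma measurable_ratio {E : Set (RN N)} (hE : MeasurableSet E) (r : ℝ) :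
    Measurable fun y : RN N => volume (E ∩ ball y r) / volume (ball y r) := by
  have : (fun y : RN N => volume (E ∩ ball y r) / volume (ball y r))
      = fun y => volume (E ∩ ball y r) / volume (ball (0 : RN N) r) := by
    funext y; rw [volume_ball_const]
  rw [this]
  exact (measurable_volume_inter_ball hE r).div measurable_const


lemma ratio_mem_Icc_of_rat {E : Set (RN N)} {y : RN N} {ρ δ : ℝ} (hρ : 0 < ρ) (hρδ : ρ < δ)
    {a b : ℝ≥0∞}
    (h : ∀ q : ℚ, 0 < (q:ℝ) → (q:ℝ) < δ →
      volume (E ∩ ball y q) / volume (ball y q) ∈ Icc a b) :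
    volume (E ∩ ball y ρ) / volume (ball y ρ) ∈ Icc a b := by
  set ι := {q : ℚ // 0 < (q:ℝ) ∧ (q:ℝ) < ρ} with hι
  obtain ⟨q0, hq01, hq02⟩ := exists_rat_btwn hρ
  haveI : Nonempty ι := ⟨⟨q0, hq01, hq02⟩⟩
  have hdir : ∀ (T : Set (RN N)), Directed (· ⊆ ·) (fun i : ι => T ∩ ball y (i:ℚ)) := by
    intro T i j
    refine ⟨⟨max i.1 j.1, ?_, ?_⟩, ?_, ?_⟩
    · simp only [Rat.cast_max]; exact lt_max_of_lt_left i.2.1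
    · simp only [Rat.cast_max]; exact max_lt i.2.2 j.2.2
    · exact inter_subset_inter_right _ (ball_subset_ball (by simp [le_max_left]))
    · exact inter_subset_inter_right _ (ball_subset_ball (by simp [le_max_right]))
  have hunion : ∀ (T : Set (RN N)), (⋃ i : ι, T ∩ ball y (i:ℚ)) = T ∩ ball y ρ := by
    intro T
    apply Subset.antisymm
    · exact iUnion_subset fun i => inter_subset_inter_right _ (ball_subset_ball i.2.2.le)
    · rintro x ⟨hxT, hxb⟩
      obtain ⟨q, hq1, hq2⟩ := exists_rat_btwn (mem_ball.1 hxb)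
      exact mem_iUnion.2 ⟨⟨q, lt_of_le_of_lt dist_nonneg hq1, hq2⟩, hxT, mem_ball.2 hq1⟩
  have hnum : volume (E ∩ ball y ρ) = ⨆ i : ι, volume (E ∩ ball y ((i:ℚ):ℝ)) := by
    rw [← hunion E]; exact Directed.measure_iUnion (hdir E)
  have hden : volume (ball y ρ) = ⨆ i : ι, volume (ball y ((i:ℚ):ℝ)) := by
    have h2 : (⋃ i : ι, ball y ((i:ℚ):ℝ)) = ball y ρ := by
      simpa [univ_inter] using hunion univ
    rw [← h2]
    simpa [univ_inter] using Directed.measure_iUnion (μ := volume) (hdir univ)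
  have d0 : volume (ball y ρ) ≠ 0 := (measure_ball_pos volume y hρ).ne'
  have dt : volume (ball y ρ) ≠ ⊤ := measure_ball_lt_top.ne
  have di0 : ∀ i : ι, volume (ball y ((i:ℚ):ℝ)) ≠ 0 :=
    fun i => (measure_ball_pos volume y i.2.1).ne'
  have dit : ∀ i : ι, volume (ball y ((i:ℚ):ℝ)) ≠ ⊤ := fun i => measure_ball_lt_top.ne
  have hIcc : ∀ i : ι, volume (E ∩ ball y ((i:ℚ):ℝ)) / volume (ball y ((i:ℚ):ℝ)) ∈ Icc a b :=
    fun i => h i.1 i.2.1 (i.2.2.trans hρδ)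
  constructor
  · rw [ENNReal.le_div_iff_mul_le (Or.inl d0) (Or.inl dt), hden, ENNReal.mul_iSup]
    refine iSup_le fun i => ?_
    have := (ENNReal.le_div_iff_mul_le (Or.inl (di0 i)) (Or.inl (dit i))).1 (hIcc i).1
    exact this.trans (measure_mono (inter_subset_inter_right _ (ball_subset_ball i.2.2.le)))
  · by_cases hb : b = ⊤
    · simp [hb]
    rw [ENNReal.div_le_iff_le_mul (Or.inl d0) (Or.inl dt), hnum]
    refine iSup_le fun i => ?_
    have := (ENNReal.div_le_iff_le_mul (Or.inl (di0 i)) (Or.inl (dit i))).1 (hIcc i).2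
    exact this.trans (mul_le_mul_right (measure_mono (ball_subset_ball i.2.2.le)) b)


lemma hasDensityAt_iff_rat {E : Set (RN N)} {c : ℝ} (y : RN N) :
    HasDensityAt E c y ↔ ∀ k : ℕ, ∃ δ : ℚ, 0 < δ ∧ ∀ q : ℚ, 0 < (q:ℝ) → (q:ℝ) < (δ:ℝ) →
      volume (E ∩ ball y q) / volume (ball y q) ∈
        Icc (ENNReal.ofReal c - ((k:ℝ≥0∞)+1)⁻¹) (ENNReal.ofReal c + ((k:ℝ≥0∞)+1)⁻¹) := by
  have hεpos : ∀ k : ℕ, (0:ℝ≥0∞) < ((k:ℝ≥0∞)+1)⁻¹ := fun k =>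
    ENNReal.inv_pos.2 (by simp)
  constructor
  · intro h k
    have := (ENNReal.tendsto_nhds ENNReal.ofReal_ne_top).1 h _ (hεpos k)
    obtain ⟨u', hu', hsub⟩ := mem_nhdsGT_iff_exists_Ioo_subset.1 this
    obtain ⟨δ, hδ1, hδ2⟩ := exists_rat_btwn (mem_Ioi.1 hu')
    refine ⟨δ, by exact_mod_cast hδ1, fun q hq1 hq2 => ?_⟩
    exact hsub ⟨hq1, lt_trans hq2 hδ2⟩
  · intro h
    unfold HasDensityAt
    rw [ENNReal.tendsto_nhds ENNReal.ofReal_ne_top]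
    intro ε hε
    obtain ⟨n, hn⟩ := ENNReal.exists_inv_nat_lt hε.ne'
    have hnε : ((n:ℝ≥0∞)+1)⁻¹ ≤ ε := by
      refine le_trans (ENNReal.inv_le_inv.2 ?_) hn.le
      simp
    obtain ⟨δ, hδ, hδh⟩ := h n
    have hmem : Ioo (0:ℝ) δ ∈ 𝓝[>] (0:ℝ) :=
      Ioo_mem_nhdsGT (by exact_mod_cast hδ)
    filter_upwards [hmem] with ρ hρ
    have := ratio_mem_Icc_of_rat (E := E) hρ.1 hρ.2 hδh
    constructor
    · exact le_trans (tsub_le_tsub_left hnε _) this.1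
    · exact le_trans this.2 (add_le_add_right hnε _)

lemma measurableSet_hasDensityAt {E : Set (RN N)} (hE : MeasurableSet E) (c : ℝ) :
    MeasurableSet {y : RN N | HasDensityAt E c y} := by
  have heq : {y : RN N | HasDensityAt E c y} = ⋂ k : ℕ, ⋃ δ : ℚ, ⋃ _ : 0 < δ,
      ⋂ q : ℚ, ⋂ _ : 0 < (q:ℝ) ∧ (q:ℝ) < (δ:ℝ),
      {y : RN N | volume (E ∩ ball y q) / volume (ball y q) ∈
        Icc (ENNReal.ofReal c - ((k:ℝ≥0∞)+1)⁻¹) (ENNReal.ofReal c + ((k:ℝ≥0∞)+1)⁻¹)} := by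
    ext y
    simp only [mem_setOf_eq, hasDensityAt_iff_rat, mem_iInter, mem_iUnion, mem_setOf_eq]
    constructor
    · intro h k
      obtain ⟨δ, hδ, hq⟩ := h k
      exact ⟨δ, hδ, fun q hq' => hq q hq'.1 hq'.2⟩
    · intro h k
      obtain ⟨δ, hδ, hq⟩ := h k
      exact ⟨δ, hδ, fun q h1 h2 => hq q ⟨h1, h2⟩⟩
  rw [heq]
  refine MeasurableSet.iInter fun k => MeasurableSet.iUnion fun δ =>
    MeasurableSet.iUnion fun _ => MeasurableSet.iInter fun q =>
    MeasurableSet.iInter fun _ => ?_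
  exact (measurable_ratio hE q) measurableSet_Icc

noncomputable section
attribute [local instance] Classical.propDecidable


section APLemmas

variable {u : RN N → ℝ} {y : RN N}

lemma le_apUpper {t : ℝ} (h : ¬ HasDensityAt {x | u x > t} 0 y) :
    (t : EReal) ≤ apUpper u y := by
  refine le_sInf ?_
  rintro b ⟨s, hs, rfl⟩
  rw [EReal.coe_le_coe_iff]
  by_contra hlt
  push_neg at hlt
  exact h (hasDensityAt_zero_mono (fun x hx => lt_trans hlt hx) hs)

lemma apLower_le {t : ℝ} (h : ¬ HasDensityAt {x | u x > t} 1 y) :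
    apLower u y ≤ (t : EReal) := by
  refine sSup_le ?_
  rintro b ⟨s, hs, rfl⟩
  rw [EReal.coe_le_coe_iff]
  by_contra hlt
  push_neg at hlt
  exact h (hasDensityAt_one_mono (fun x hx => lt_trans hlt hx) hs)

def ratUpper (u : RN N → ℝ) (y : RN N) : EReal :=
  ⨅ q : ℚ, ({z : RN N | HasDensityAt {x | u x > (q:ℝ)} 0 z}).piecewise
    (fun _ => ((q:ℝ) : EReal)) (fun _ => ⊤) y

def ratLower (u : RN N → ℝ) (y : RN N) : EReal :=
  ⨆ q : ℚ, ({z : RN N | HasDensityAt {x | u x > (q:ℝ)} 1 z}).piecewise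
    (fun _ => ((q:ℝ) : EReal)) (fun _ => ⊥) y

lemma apUpper_eq_ratUpper (u : RN N → ℝ) (y : RN N) : apUpper u y = ratUpper u y := by
  apply le_antisymm
  · refine le_iInf fun q => ?_
    by_cases hq : y ∈ {z : RN N | HasDensityAt {x | u x > (q:ℝ)} 0 z}
    · rw [Set.piecewise_eq_of_mem _ _ _ hq]
      exact sInf_le ⟨(q:ℝ), hq, rfl⟩
    · rw [Set.piecewise_eq_of_notMem _ _ _ hq]
      exact le_top
  · refine le_sInf ?_
    rintro b ⟨t, ht, rfl⟩
    by_contra hlt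
    push_neg at hlt
    obtain ⟨q, hq1, hq2⟩ := EReal.exists_rat_btwn_of_lt hlt
    have hqd : y ∈ {z : RN N | HasDensityAt {x | u x > (q:ℝ)} 0 z} :=
      hasDensityAt_zero_mono (fun x hx => lt_trans (EReal.coe_lt_coe_iff.1 hq1) hx) ht
    have := iInf_le (fun q : ℚ => ({z : RN N | HasDensityAt {x | u x > (q:ℝ)} 0 z}).piecewise
      (fun _ => ((q:ℝ) : EReal)) (fun _ => ⊤) y) q
    rw [Set.piecewise_eq_of_mem _ _ _ hqd] at this
    exact absurd (this.trans_lt hq2) (lt_irrefl _)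

lemma apLower_eq_ratLower (u : RN N → ℝ) (y : RN N) : apLower u y = ratLower u y := by
  apply le_antisymm
  · refine sSup_le ?_
    rintro b ⟨t, ht, rfl⟩
    by_contra hlt
    push_neg at hlt
    obtain ⟨q, hq1, hq2⟩ := EReal.exists_rat_btwn_of_lt hlt
    have hqd : y ∈ {z : RN N | HasDensityAt {x | u x > (q:ℝ)} 1 z} :=
      hasDensityAt_one_mono (fun x hx => lt_trans (EReal.coe_lt_coe_iff.1 hq2) hx) ht
    have := le_iSup (fun q : ℚ => ({z : RN N | HasDensityAt {x | u x > (q:ℝ)} 1 z}).piecewise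
      (fun _ => ((q:ℝ) : EReal)) (fun _ => ⊥) y) q
    rw [Set.piecewise_eq_of_mem _ _ _ hqd] at this
    exact absurd (hq1.trans_le this) (lt_irrefl _)
  · refine iSup_le fun q => ?_
    by_cases hq : y ∈ {z : RN N | HasDensityAt {x | u x > (q:ℝ)} 1 z}
    · rw [Set.piecewise_eq_of_mem _ _ _ hq]
      exact le_sSup ⟨(q:ℝ), hq, rfl⟩
    · rw [Set.piecewise_eq_of_notMem _ _ _ hq]
      exact bot_le

lemma measurable_ratUpper (hum : Measurable u) : Measurable (ratUpper u) := by
  refine Measurable.iInf fun q => ?_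
  exact Measurable.piecewise
    (measurableSet_hasDensityAt (measurableSet_lt measurable_const hum) 0)
    measurable_const measurable_const

lemma measurable_ratLower (hum : Measurable u) : Measurable (ratLower u) := by
  refine Measurable.iSup fun q => ?_
  exact Measurable.piecewise
    (measurableSet_hasDensityAt (measurableSet_lt measurable_const hum) 1)
    measurable_const measurable_const

end APLemmas

lemma measure_interval_le_jump (u : RN N → ℝ) (y : RN N) :
    volume ({t : ℝ | apLower u y ≤ (t : EReal) ∧ (t : EReal) ≤ apUpper u y} ∩ Ioi (0:ℝ))
      ≤ (apDiscont u).indicator (jumpE u) y := by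
  set a := apLower u y with ha
  set b := apUpper u y with hb
  by_cases hab : b = a
  · have hy : y ∉ apDiscont u := by simp [apDiscont, ← ha, ← hb, hab]
    rw [indicator_of_notMem hy]
    rw [hab]
    induction a with
    | bot =>
      have : {t : ℝ | (⊥ : EReal) ≤ (t : EReal) ∧ (t : EReal) ≤ (⊥ : EReal)} = ∅ := by
        ext t; simp
      simp [this]
    | coe r =>
      refine le_trans (measure_mono ?_) (le_of_eq (measure_singleton r))
      rintro t ⟨⟨h1, h2⟩, _⟩
      have : (t : EReal) = (r : EReal) := le_antisymm h2 h1
      simpa using EReal.coe_eq_coe_iff.1 this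
    | top =>
      have : {t : ℝ | (⊤ : EReal) ≤ (t : EReal) ∧ (t : EReal) ≤ (⊤ : EReal)} = ∅ := by
        ext t
        simp only [mem_setOf_eq, mem_empty_iff_false, iff_false, not_and]
        intro h
        exact absurd (top_le_iff.1 h) (EReal.coe_ne_top t)
      simp [this]
  · have hy : y ∈ apDiscont u := hab
    rw [indicator_of_mem hy]
    refine le_trans ?_ (le_sup_left (a := erealToENNReal (b - a)))
    induction b with
    | bot =>
      have : {t : ℝ | a ≤ (t : EReal) ∧ (t : EReal) ≤ (⊥ : EReal)} = ∅ := by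
        ext t
        simp only [mem_setOf_eq, mem_empty_iff_false, iff_false, not_and]
        intro _ h
        exact absurd (le_bot_iff.1 h) (EReal.coe_ne_bot t)
      simp [this]
    | top =>
      induction a with
      | bot => simp [erealToENNReal, EReal.top_sub_bot]
      | coe r => simp [erealToENNReal, EReal.top_sub_coe]
      | top =>
        have : {t : ℝ | (⊤ : EReal) ≤ (t : EReal) ∧ (t : EReal) ≤ (⊤ : EReal)} = ∅ := by
          ext t
          simp only [mem_setOf_eq, mem_empty_iff_false, iff_false, not_and]
          intro h
          exact absurd (top_le_iff.1 h) (EReal.coe_ne_top t)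
        simp [this]
    | coe s =>
      induction a with
      | bot => simp [erealToENNReal, EReal.coe_sub_bot]
      | top =>
        have : {t : ℝ | (⊤ : EReal) ≤ (t : EReal) ∧ (t : EReal) ≤ ((s:ℝ) : EReal)} = ∅ := by
          ext t
          simp only [mem_setOf_eq, mem_empty_iff_false, iff_false, not_and]
          intro h
          exact absurd (top_le_iff.1 h) (EReal.coe_ne_top t)
        simp [this]
      | coe r =>
        have hsub : {t : ℝ | ((r:ℝ) : EReal) ≤ (t : EReal) ∧ (t : EReal) ≤ ((s:ℝ) : EReal)}
            ∩ Ioi (0:ℝ) ⊆ Icc r s := by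
          rintro t ⟨⟨h1, h2⟩, _⟩
          exact ⟨EReal.coe_le_coe_iff.1 h1, EReal.coe_le_coe_iff.1 h2⟩
        refine le_trans (measure_mono hsub) ?_
        rw [Real.volume_Icc]
        have : ((s : EReal) - (r : EReal)) = ((s - r : ℝ) : EReal) := (EReal.coe_sub s r).symm
        rw [erealToENNReal, if_neg (by rw [this]; exact EReal.coe_ne_top _), this,
          EReal.toReal_coe]

end


end AuxProofs

/-- Coarea-type estimate on the boundary: the integral over `t > 0` of
`ℋ^{N-1}(∂*Ω^t ∩ ∂Ω)` is bounded by the jump integral over `∂Ω ∩ S(u)`. -/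
theorem boundary_coarea_estimate (N : ℕ) (hN : 2 ≤ N) (Ω : Set (RN N))
    (hΩo : IsOpen Ω) (hΩb : Bornology.IsBounded Ω)
    (hσ : SigmaFiniteOn μH[(N : ℝ) - 1] (frontier Ω))
    (u : RN N → ℝ) (hum : Measurable u) (hu0 : ∀ x ∉ Ω, u x = 0)
    (hpos : ∀ x ∈ Ω, 0 ≤ u x) :
    (∫⁻ t in Ioi (0 : ℝ),
        μH[(N : ℝ) - 1] (essBoundary {x ∈ Ω | t < u x} ∩ frontier Ω)) ≤
      ∫⁻ y in frontier Ω ∩ apDiscont u, jumpE u y ∂μH[(N : ℝ) - 1] := by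
  set μ : Measure (RN N) := μH[(N : ℝ) - 1] with hμdef
  set ν : Measure (RN N) := μ.restrict (frontier Ω) with hνdef
  have hfr : MeasurableSet (frontier Ω) := isClosed_frontier.measurableSet
  haveI hsf : SigmaFinite ν := by
    obtain ⟨f, hf, hfU⟩ := hσ
    refine ⟨⟨⟨fun n => f n ∪ (frontier Ω)ᶜ, fun _ => mem_univ _, fun n => ?_, ?_⟩⟩⟩
    · calc ν (f n ∪ (frontier Ω)ᶜ) ≤ ν (f n) + ν (frontier Ω)ᶜ := measure_union_le _ _
        _ = μ (f n ∩ frontier Ω) + μ ((frontier Ω)ᶜ ∩ frontier Ω) := by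
            rw [hνdef, Measure.restrict_apply' hfr, Measure.restrict_apply' hfr]
        _ = μ (f n ∩ frontier Ω) + 0 := by rw [compl_inter_self, measure_empty]
        _ ≤ μ (f n) + 0 := by gcongr; exact inter_subset_left
        _ < ⊤ := by simpa using (hf n).2
    · rw [← iUnion_union, ← hfU, union_compl_self]
  -- measurability of the rational upper/lower functions
  have hU : Measurable (ratUpper u) := measurable_ratUpper hum
  have hL : Measurable (ratLower u) := measurable_ratLower hum
  set M : Set (ℝ × RN N) :=
    {p : ℝ × RN N | ratLower u p.2 ≤ (p.1 : EReal) ∧ (p.1 : EReal) ≤ ratUpper u p.2} with hMdef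
  have hM : MeasurableSet M := by
    refine MeasurableSet.inter ?_ ?_
    · exact measurableSet_le (α := EReal) (hL.comp measurable_snd)
        (measurable_coe_real_ereal.comp measurable_fst)
    · exact measurableSet_le (α := EReal) (measurable_coe_real_ereal.comp measurable_fst)
        (hU.comp measurable_snd)
  have hMind : Measurable (M.indicator (fun _ => (1:ℝ≥0∞))) := measurable_const.indicator hM
  have hsec : ∀ t : ℝ, MeasurableSet {y : RN N | ratLower u y ≤ (t:EReal) ∧ (t:EReal) ≤ ratUpper u y} :=
    fun t => (measurableSet_le (α := EReal) hL measurable_const).inter (measurableSet_le (α := EReal) measurable_const hU)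
  have hdisc : MeasurableSet (apDiscont u) := by
    have : apDiscont u = ({x : RN N | ratUpper u x ≤ ratLower u x} ∩ {x | ratLower u x ≤ ratUpper u x})ᶜ := by
      ext x
      simp only [apDiscont, mem_setOf_eq, mem_compl_iff, mem_inter_iff, not_and_or,
        apUpper_eq_ratUpper u x, apLower_eq_ratLower u x]
      constructor
      · intro h
        rcases lt_or_gt_of_ne h with h' | h'
        · exact Or.inr (not_le.2 h')
        · exact Or.inl (not_le.2 h')
      · rintro (h | h) he
        · exact h (le_of_eq he)
        · exact h (le_of_eq he.symm)
    rw [this]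
    exact ((measurableSet_le (α := EReal) hU hL).inter (measurableSet_le (α := EReal) hL hU)).compl
  have hsub : ∀ t : ℝ, 0 < t → essBoundary {x | t < u x} ⊆
      {y : RN N | ratLower u y ≤ (t:EReal) ∧ (t:EReal) ≤ ratUpper u y} := by
    intro t ht y hy
    rw [essBoundary, mem_diff, mem_union, not_or] at hy
    obtain ⟨-, h0, h1⟩ := hy
    constructor
    · rw [← apLower_eq_ratLower]
      exact apLower_le h1
    · rw [← apUpper_eq_ratUpper]
      exact le_apUpper h0
  have hsep : ∀ t : ℝ, 0 < t → {x | x ∈ Ω ∧ t < u x} = {x | t < u x} := by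
    intro t ht
    ext x
    simp only [mem_setOf_eq, and_iff_right_iff_imp]
    intro hx
    by_contra hxΩ
    rw [hu0 x hxΩ] at hx
    exact absurd (ht.trans hx) (lt_irrefl _)
  calc ∫⁻ t in Ioi (0:ℝ), μ (essBoundary {x ∈ Ω | t < u x} ∩ frontier Ω)
      ≤ ∫⁻ t in Ioi (0:ℝ), ∫⁻ y, M.indicator (fun _ => (1:ℝ≥0∞)) (t, y) ∂ν := by
        refine setLIntegral_mono (Measurable.lintegral_prod_right' hMind) ?_
        intro t ht
        have h1 : essBoundary {x ∈ Ω | t < u x} ∩ frontier Ω ⊆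
            {y : RN N | ratLower u y ≤ (t:EReal) ∧ (t:EReal) ≤ ratUpper u y} ∩ frontier Ω := by
          refine inter_subset_inter_left _ ?_
          rw [show {x ∈ Ω | t < u x} = {x | t < u x} from hsep t ht]
          exact hsub t ht
        refine le_trans (measure_mono h1) ?_
        rw [← Measure.restrict_apply' hfr, ← hνdef, ← lintegral_indicator_one (hsec t)]
        refine le_of_eq (lintegral_congr fun y => ?_)
        by_cases hy : ratLower u y ≤ (t:EReal) ∧ (t:EReal) ≤ ratUpper u y
        · simp [Set.indicator_apply, hMdef, mem_setOf_eq, hy.1, hy.2]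
        · simp only [Set.indicator_apply, hMdef, mem_setOf_eq]
          rw [if_neg (by exact hy), if_neg (by exact hy)]
    _ = ∫⁻ y, (∫⁻ t in Ioi (0:ℝ), M.indicator (fun _ => (1:ℝ≥0∞)) (t, y)) ∂ν := by
        refine lintegral_lintegral_swap ?_
        exact hMind.aemeasurable
    _ ≤ ∫⁻ y, (apDiscont u).indicator (jumpE u) y ∂ν := by
        refine lintegral_mono fun y => ?_
        have h2 : (fun t : ℝ => M.indicator (fun _ => (1:ℝ≥0∞)) (t, y)) =
            ({t : ℝ | ratLower u y ≤ (t:EReal) ∧ (t:EReal) ≤ ratUpper u y}).indicator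
              (fun _ => (1:ℝ≥0∞)) := by
          funext t
          rfl
        have hts : MeasurableSet {t : ℝ | ratLower u y ≤ (t:EReal) ∧ (t:EReal) ≤ ratUpper u y} := by
          refine MeasurableSet.inter ?_ ?_
          · exact measurable_coe_real_ereal measurableSet_Ici
          · exact measurable_coe_real_ereal measurableSet_Iic
        rw [h2, lintegral_indicator hts, setLIntegral_one, Measure.restrict_apply' measurableSet_Ioi]
        have h3 : {t : ℝ | ratLower u y ≤ (t:EReal) ∧ (t:EReal) ≤ ratUpper u y} =
            {t : ℝ | apLower u y ≤ (t:EReal) ∧ (t:EReal) ≤ apUpper u y} := by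
          rw [apLower_eq_ratLower, apUpper_eq_ratUpper]
        rw [h3]
        exact measure_interval_le_jump u y
    _ = ∫⁻ y in frontier Ω ∩ apDiscont u, jumpE u y ∂μ := by
        rw [lintegral_indicator hdisc, hνdef, Measure.restrict_restrict hdisc, inter_comm]

end
end

section
/- Let Ω ⊂ ℝ^N be a bounded open set, let u : Ω → ℝ be a Borel function extended to zero outside Ω, and let u ≥ 0, u ∈ L^∞(Ω), with Ω^t = {x ∈ Ω : u(x) > t} and Ω^t_1 the set of points of density 1 of Ω^t. Then for every t > 0, t · ℋ^{N−1}((∂*Ω^t ∪ Ω^t_1) ∩ ∂Ω) ≤ ∫_{∂Ω} u⁺(y) dℋ^{N−1}(y). -/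
open MeasureTheory Metric Set Filter Topology ENNReal

noncomputable section

namespace BCAux

variable {N : ℕ}

lemma density0_mono {E F : Set (RN N)} (hEF : E ⊆ F) {x : RN N}
    (h : HasDensityAt F 0 x) : HasDensityAt E 0 x := by
  unfold HasDensityAt at h ⊢
  simp only [ENNReal.ofReal_zero] at h ⊢
  refine tendsto_of_tendsto_of_tendsto_of_le_of_le tendsto_const_nhds h
    (fun ρ => zero_le) (fun ρ => ?_)
  exact ENNReal.div_le_div_right
    (measure_mono (inter_subset_inter hEF Subset.rfl)) _

lemma coe_le_apUpper {u : RN N → ℝ} {E : Set (RN N)} {t : ℝ} {x : RN N}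
    (hE : E ⊆ {y | t < u y}) (hx : ¬ HasDensityAt E 0 x) :
    (t : EReal) ≤ apUpper u x := by
  apply le_sInf
  rintro b ⟨s, hs, rfl⟩
  rw [EReal.coe_le_coe_iff]
  by_contra hlt
  push_neg at hlt
  exact hx (density0_mono (fun y hy => hlt.trans (hE hy)) hs)

lemma ofReal_le_erealToENNReal {a : EReal} {t : ℝ} (h : (t : EReal) ≤ a) :
    ENNReal.ofReal t ≤ erealToENNReal a := by
  unfold erealToENNReal
  split_ifs with hT
  · exact le_top
  · have hB : a ≠ ⊥ := ((EReal.bot_lt_coe t).trans_le h).ne'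
    apply ENNReal.ofReal_le_ofReal
    rw [← EReal.coe_toReal hT hB, EReal.coe_le_coe_iff] at h
    exact h

lemma measurable_ballMeas {E : Set (RN N)} (hE : MeasurableSet E) (ρ : ℝ) :
    Measurable fun x : RN N => volume (E ∩ ball x ρ) := by
  have hT : MeasurableSet {p : RN N × RN N | p.2 ∈ E ∧ dist p.2 p.1 < ρ} := by
    refine (hE.preimage measurable_snd).inter ?_
    exact (isOpen_lt (continuous_snd.dist continuous_fst) continuous_const).measurableSet
  have hset : ∀ x : RN N, E ∩ ball x ρ =
      Prod.mk x ⁻¹' {p : RN N × RN N | p.2 ∈ E ∧ dist p.2 p.1 < ρ} := by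
    intro x
    ext y
    simp [Set.mem_inter_iff, mem_ball]
  simp_rw [hset]
  exact measurable_measure_prodMk_left hT

lemma ratio_doubling {E : Set (RN N)} {x : RN N} {ρ q : ℝ} {ε : ℝ≥0∞}
    (hρ : 0 < ρ) (h1 : ρ ≤ q) (h2 : q ≤ 2 * ρ)
    (h : volume (E ∩ ball x q) / volume (ball x q) ≤ ε) :
    volume (E ∩ ball x ρ) / volume (ball x ρ) ≤ 2 ^ N * ε := by
  have hq : 0 < q := hρ.trans_le h1
  have hq0 : volume (ball x q) ≠ 0 := (measure_ball_pos volume x hq).ne'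
  have hqT : volume (ball x q) ≠ ⊤ := measure_ball_lt_top.ne
  have hρ0 : volume (ball x ρ) ≠ 0 := (measure_ball_pos volume x hρ).ne'
  have hρT : volume (ball x ρ) ≠ ⊤ := measure_ball_lt_top.ne
  have key : volume (ball x q) ≤ 2 ^ N * volume (ball x ρ) := by
    rw [Measure.addHaar_ball_of_pos volume x hq, Measure.addHaar_ball_of_pos volume x hρ,
      finrank_euclideanSpace_fin]
    calc ENNReal.ofReal (q ^ N) * volume (ball (0 : RN N) 1)
        ≤ ENNReal.ofReal ((2 * ρ) ^ N) * volume (ball (0 : RN N) 1) := by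
          gcongr
      _ = 2 ^ N * (ENNReal.ofReal (ρ ^ N) * volume (ball (0 : RN N) 1)) := by
          rw [mul_pow, ENNReal.ofReal_mul (by positivity), ← mul_assoc]
          congr 1
          rw [ENNReal.ofReal_pow (by norm_num)]
          norm_num
  have hnum : volume (E ∩ ball x ρ) ≤ volume (E ∩ ball x q) :=
    measure_mono (inter_subset_inter Subset.rfl (ball_subset_ball h1))
  have hle : volume (E ∩ ball x q) ≤ ε * volume (ball x q) :=
    (ENNReal.div_le_iff_le_mul (Or.inl hq0) (Or.inl hqT)).mp h
  rw [ENNReal.div_le_iff_le_mul (Or.inl hρ0) (Or.inl hρT)]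
  calc volume (E ∩ ball x ρ) ≤ ε * volume (ball x q) := hnum.trans hle
    _ ≤ ε * (2 ^ N * volume (ball x ρ)) := by gcongr
    _ = 2 ^ N * ε * volume (ball x ρ) := by ring

lemma measurableSet_densityPts0 {E : Set (RN N)} (hE : MeasurableSet E) :
    MeasurableSet (densityPts E 0) := by
  have hEq : densityPts E 0 =
      ⋂ (k : ℕ), ⋃ (m : ℕ), ⋂ (q : ℚ) (_ : 0 < (q : ℝ)) (_ : (q : ℝ) < 1 / ((m : ℝ) + 1)),
        {x : RN N | volume (E ∩ ball x (q : ℝ)) / volume (ball x (q : ℝ))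
          ≤ ((k : ℝ≥0∞) + 1)⁻¹} := by
    ext x
    simp only [densityPts, HasDensityAt, mem_setOf_eq, ENNReal.ofReal_zero,
      mem_iInter, mem_iUnion]
    constructor
    · intro h k
      have hε : (0 : ℝ≥0∞) < ((k : ℝ≥0∞) + 1)⁻¹ := by
        simp [ENNReal.inv_pos]
      have hev := ENNReal.tendsto_nhds_zero.mp h _ hε
      rw [Filter.eventually_iff, mem_nhdsGT_iff_exists_Ioc_subset] at hev
      obtain ⟨w, hw, hsub⟩ := hev
      obtain ⟨m, hm⟩ := exists_nat_one_div_lt (mem_Ioi.mp hw)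
      exact ⟨m, fun q hq1 hq2 => hsub ⟨hq1, (hq2.trans hm).le⟩⟩
    · intro h
      rw [ENNReal.tendsto_nhds_zero]
      intro ε hε
      obtain ⟨k, hk⟩ : ∃ k : ℕ, (2 : ℝ≥0∞) ^ N * ((k : ℝ≥0∞) + 1)⁻¹ ≤ ε := by
        have hne : ε / 2 ^ N ≠ 0 :=
          (ENNReal.div_pos hε.ne' (ENNReal.pow_ne_top ENNReal.ofNat_ne_top)).ne'
        obtain ⟨n, hn⟩ := ENNReal.exists_inv_nat_lt hne
        refine ⟨n, ?_⟩
        have h1 : ((n : ℝ≥0∞) + 1)⁻¹ ≤ (n : ℝ≥0∞)⁻¹ :=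
          ENNReal.inv_le_inv.mpr le_self_add
        calc (2 : ℝ≥0∞) ^ N * ((n : ℝ≥0∞) + 1)⁻¹
            ≤ 2 ^ N * (ε / 2 ^ N) := by
              gcongr
              exact (h1.trans hn.le)
          _ ≤ ε := ENNReal.mul_div_le
      obtain ⟨m, hm⟩ := h k
      have hδ : (0 : ℝ) < 1 / (2 * ((m : ℝ) + 1)) := by positivity
      filter_upwards [Ioo_mem_nhdsGT hδ] with ρ hρ
      obtain ⟨q, hq1, hq2⟩ := exists_rat_btwn (show ρ < 2 * ρ by linarith [hρ.1])
      have hq0 : 0 < (q : ℝ) := hρ.1.trans hq1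
      have hqm : (q : ℝ) < 1 / ((m : ℝ) + 1) := by
        have h2 : 2 * (1 / (2 * ((m : ℝ) + 1))) = 1 / ((m : ℝ) + 1) := by
          field_simp
        have := hρ.2
        nlinarith
      have hRq := hm q hq0 hqm
      calc volume (E ∩ ball x ρ) / volume (ball x ρ)
          ≤ 2 ^ N * ((k : ℝ≥0∞) + 1)⁻¹ :=
            ratio_doubling hρ.1 hq1.le hq2.le hRq
        _ ≤ ε := hk
  rw [hEq]
  refine MeasurableSet.iInter fun k => MeasurableSet.iUnion fun m =>
    MeasurableSet.iInter fun q => MeasurableSet.iInter fun _ =>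
      MeasurableSet.iInter fun _ => ?_
  have hconst : (fun x : RN N => volume (ball x (q : ℝ)))
      = fun _ => volume (ball (0 : RN N) (q : ℝ)) :=
    funext fun x => Measure.addHaar_ball_center volume x _
  have hmeas : Measurable fun x : RN N =>
      volume (E ∩ ball x (q : ℝ)) / volume (ball x (q : ℝ)) := by
    apply Measurable.div (measurable_ballMeas hE _)
    rw [hconst]
    exact measurable_const
  exact measurableSet_le hmeas measurable_const

end BCAux

/-- Chebyshev-type estimate on the boundary:
`t ⋅ ℋ^{N-1}((∂*Ω^t ∪ Ω^t₁) ∩ ∂Ω) ≤ ∫_{∂Ω} u⁺ dℋ^{N-1}` for every `t > 0`. -/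
theorem boundary_chebyshev (N : ℕ) (Ω : Set (RN N)) (hΩo : IsOpen Ω)
    (hΩb : Bornology.IsBounded Ω) (u : RN N → ℝ) (hum : Measurable u)
    (hu0 : ∀ x ∉ Ω, u x = 0) (hpos : ∀ x ∈ Ω, 0 ≤ u x)
    (huL : MemLp u ⊤ (volume.restrict Ω)) (t : ℝ) (ht : 0 < t) :
    ENNReal.ofReal t *
        μH[(N : ℝ) - 1]
          ((essBoundary {x ∈ Ω | t < u x} ∪ densityPts {x ∈ Ω | t < u x} 1) ∩
            frontier Ω) ≤
      ∫⁻ y in frontier Ω, erealToENNReal (apUpper u y) ∂μH[(N : ℝ) - 1] := by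
  set E : Set (RN N) := {x ∈ Ω | t < u x} with hEdef
  have hEmeas : MeasurableSet E := by
    have : E = Ω ∩ u ⁻¹' (Ioi t) := by
      ext y; simp [hEdef]
    rw [this]
    exact hΩo.measurableSet.inter (hum measurableSet_Ioi)
  have hD : MeasurableSet (densityPts E 0) := BCAux.measurableSet_densityPts0 hEmeas
  set M : Set (RN N) := (densityPts E 0)ᶜ ∩ frontier Ω with hMdef
  have hM : MeasurableSet M := hD.compl.inter isClosed_frontier.measurableSet
  have hsub : (essBoundary E ∪ densityPts E 1) ∩ frontier Ω ⊆ M := by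
    rintro x ⟨hx, hfr⟩
    refine ⟨?_, hfr⟩
    rcases hx with h | h
    · exact fun h0 => h.2 (Or.inl h0)
    · intro h0
      have huniq := tendsto_nhds_unique (h0 : HasDensityAt E 0 x) (h : HasDensityAt E 1 x)
      simp [ENNReal.ofReal_one] at huniq
  have hpt : ∀ x ∈ M, ENNReal.ofReal t ≤ erealToENNReal (apUpper u x) := by
    rintro x ⟨hx, -⟩
    apply BCAux.ofReal_le_erealToENNReal
    exact BCAux.coe_le_apUpper (fun y hy => hy.2) hx
  calc ENNReal.ofReal t * μH[(N : ℝ) - 1] ((essBoundary E ∪ densityPts E 1) ∩ frontier Ω)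
      ≤ ENNReal.ofReal t * μH[(N : ℝ) - 1] M :=
        mul_le_mul_right (measure_mono hsub) _
    _ = ∫⁻ _ in M, ENNReal.ofReal t ∂μH[(N : ℝ) - 1] := (setLIntegral_const M _).symm
    _ ≤ ∫⁻ y in M, erealToENNReal (apUpper u y) ∂μH[(N : ℝ) - 1] :=
        setLIntegral_mono' hM hpt
    _ ≤ ∫⁻ y in frontier Ω, erealToENNReal (apUpper u y) ∂μH[(N : ℝ) - 1] :=
        lintegral_mono_set inter_subset_right

end
end
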